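/- arXiv:2508.12747 — 2 statements merged into one kernel-verified Lean document; each statement's English description precedes it below -/
import Mathlib

section
/- In every planar geometric storyplan of the graph G, there is no time step at which all twelve cycle vertices and two distinct apex vertices are simultaneously visible. -/
/-- The straight-line drawing `D` of the subgraph of `G` induced by the visible
vertex set `S` is planar. -/
def IsPlanarSLFrame {V : Type*} (G : SimpleGraph V) (S : Set V) (D : V → ℝ × ℝ) : Prop :=
  Set.InjOn D S ∧
  (∀ u v w, G.Adj u v → u ∈ S → v ∈ S → w ∈ S → w ≠ u → w ≠ v →
      D w ∉ openSegment ℝ (D u) (D v)) ∧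
  (∀ u v x y, G.Adj u v → G.Adj x y → u ∈ S → v ∈ S → x ∈ S → y ∈ S →
      ¬((u = x ∧ v = y) ∨ (u = y ∧ v = x)) →
      ∀ p ∈ segment ℝ (D u) (D v) ∩ segment ℝ (D x) (D y),
        ∃ z, (z = u ∨ z = v) ∧ (z = x ∨ z = y) ∧ p = D z)

/-- `(len, s, e, D)` is a planar geometric storyplan of `G`: `len ≥ 1` time steps,
each vertex `v` is visible on the nonempty interval `[s v, e v] ⊆ [1, len]`,
the endpoints of every edge co-occur, and every frame is a planar
straight-line drawing. -/
def IsGeomStoryplan {V : Type*} (G : SimpleGraph V)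
    (len : ℕ) (s e : V → ℕ) (D : V → ℝ × ℝ) : Prop :=
  1 ≤ len ∧
  (∀ v, 1 ≤ s v ∧ s v ≤ e v ∧ e v ≤ len) ∧
  (∀ u v, G.Adj u v → ∃ t, s u ≤ t ∧ t ≤ e u ∧ s v ≤ t ∧ t ≤ e v) ∧
  (∀ t, 1 ≤ t → t ≤ len → IsPlanarSLFrame G {v | s v ≤ t ∧ t ≤ e v} D)

/-- `G` admits a planar geometric storyplan. -/
def HasGeomStoryplan {V : Type*} (G : SimpleGraph V) : Prop :=
  ∃ len s e D, IsGeomStoryplan G len s e D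

/-- The 28 vertices of the graph `G`: cycle vertices `a i`, `b i`, `c i`
(`i ∈ Fin 4`), apex vertices `q i j` and edge vertices `r i j`
(`i ∈ Fin 4`, `j ∈ Fin 2`). -/
inductive GVert : Type
  | a : Fin 4 → GVert
  | b : Fin 4 → GVert
  | c : Fin 4 → GVert
  | q : Fin 4 → Fin 2 → GVert
  | r : Fin 4 → Fin 2 → GVert
  deriving DecidableEq

/-- Base relation generating the edges of `G`: the three 4-cycles
`A`, `B`, `C`; each apex vertex `q i j` adjacent to all twelve cycle vertices;
each edge vertex `r i j` adjacent to `q i j` and to the six cycle vertices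
`a i, a (i+1), b i, b (i+1), c i, c (i+1)`. -/
def GRel : GVert → GVert → Prop
  | .a i, .a k => k = i + 1
  | .b i, .b k => k = i + 1
  | .c i, .c k => k = i + 1
  | .q _ _, .a _ => True
  | .q _ _, .b _ => True
  | .q _ _, .c _ => True
  | .r i j, .q i' j' => i' = i ∧ j' = j
  | .r i _, .a k => k = i ∨ k = i + 1
  | .r i _, .b k => k = i ∨ k = i + 1
  | .r i _, .c k => k = i ∨ k = i + 1
  | _, _ => False

/-- The graph `G` from the paper (28 vertices). -/
def GraphG : SimpleGraph GVert := SimpleGraph.fromRel GRel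

/-- Vertex `v` is visible at time `t`. -/
def Visible (s e : GVert → ℕ) (t : ℕ) (v : GVert) : Prop :=
  s v ≤ t ∧ t ≤ e v

/-- All twelve cycle vertices are visible at time `t`. -/
def CyclesVisible (s e : GVert → ℕ) (t : ℕ) : Prop :=
  ∀ k : Fin 4, Visible s e t (.a k) ∧ Visible s e t (.b k) ∧ Visible s e t (.c k)


set_option maxHeartbeats 1000000

namespace NTA

open scoped Classical

abbrev Pt := ℝ × ℝ

def det2 (u v : Pt) : ℝ := u.1 * v.2 - u.2 * v.1

/-- barycentric-style determinants for triangle (p,a,b) at x -/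
def tA (p a _b x : Pt) : ℝ := det2 (p - x) (a - x)
def tB (_p a b x : Pt) : ℝ := det2 (a - x) (b - x)
def tC (p _a b x : Pt) : ℝ := det2 (b - x) (p - x)
def tDet (p a b : Pt) : ℝ := det2 (a - p) (b - p)

lemma sum_id (p a b x : Pt) : tA p a b x + tB p a b x + tC p a b x = tDet p a b := by
  simp only [tA, tB, tC, tDet, det2, Prod.fst_sub, Prod.snd_sub]
  ring

lemma tDet_rot (p a b : Pt) : tDet a b p = tDet p a b := by
  simp only [tDet, det2, Prod.fst_sub, Prod.snd_sub]; ring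

lemma tA_rot (p a b x : Pt) : tA a b p x = tB p a b x := rfl
lemma tB_rot (p a b x : Pt) : tB a b p x = tC p a b x := rfl
lemma tC_rot (p a b x : Pt) : tC a b p x = tA p a b x := rfl

/-- vector identity : tB • p + tC • a + tA • b = tDet • x -/
lemma vec_id (p a b x : Pt) :
    tB p a b x • p + tC p a b x • a + tA p a b x • b = tDet p a b • x := by
  apply Prod.ext <;>
  · simp only [tA, tB, tC, tDet, det2, Prod.fst_sub, Prod.snd_sub, Prod.fst_add, Prod.snd_add,
      Prod.smul_fst, Prod.smul_snd, smul_eq_mul]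
    ring

/-- affinity of the coordinates -/
lemma tA_combo (p a b x y : Pt) (s t : ℝ) (hst : s + t = 1) :
    tA p a b (s • x + t • y) = s * tA p a b x + t * tA p a b y := by
  have h : t = 1 - s := by linarith
  subst h
  simp only [tA, det2, Prod.fst_sub, Prod.snd_sub, Prod.fst_add, Prod.snd_add,
    Prod.smul_fst, Prod.smul_snd, smul_eq_mul]
  ring

lemma tB_combo (p a b x y : Pt) (s t : ℝ) (hst : s + t = 1) :
    tB p a b (s • x + t • y) = s * tB p a b x + t * tB p a b y := by
  rw [← tA_rot, ← tA_rot, ← tA_rot, tA_combo a b p x y s t hst]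

lemma tC_combo (p a b x y : Pt) (s t : ℝ) (hst : s + t = 1) :
    tC p a b (s • x + t • y) = s * tC p a b x + t * tC p a b y := by
  rw [← tB_rot, ← tB_rot, ← tB_rot, tB_combo a b p x y s t hst]

/-- membership in the open triangle -/
def inT (p a b x : Pt) : Prop :=
  0 < tA p a b x * tDet p a b ∧ 0 < tB p a b x * tDet p a b ∧ 0 < tC p a b x * tDet p a b

/-- membership in the closed triangle -/
def onT (p a b x : Pt) : Prop :=
  0 ≤ tA p a b x * tDet p a b ∧ 0 ≤ tB p a b x * tDet p a b ∧ 0 ≤ tC p a b x * tDet p a b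

lemma inT.onT {p a b x : Pt} (h : inT p a b x) : onT p a b x :=
  ⟨le_of_lt h.1, le_of_lt h.2.1, le_of_lt h.2.2⟩

lemma inT_rot (p a b x : Pt) : inT a b p x ↔ inT p a b x := by
  unfold inT
  rw [tA_rot, tB_rot, tC_rot, tDet_rot]
  tauto

lemma onT_rot (p a b x : Pt) : onT a b p x ↔ onT p a b x := by
  unfold onT
  rw [tA_rot, tB_rot, tC_rot, tDet_rot]
  tauto

def segsT (p a b : Pt) : Set Pt := segment ℝ p a ∪ segment ℝ a b ∪ segment ℝ b p

lemma segsT_rot (p a b : Pt) : segsT a b p = segsT p a b := by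
  unfold segsT
  ext z; simp only [Set.mem_union]; tauto

/-- points of the segment [p,a] have tA = 0 -/
lemma tA_eq_zero_of_mem_seg {p a : Pt} (b : Pt) {x : Pt} (h : x ∈ segment ℝ p a) :
    tA p a b x = 0 := by
  rw [segment_eq_image'] at h
  obtain ⟨θ, _, rfl⟩ := h
  simp only [tA, det2, Prod.fst_sub, Prod.snd_sub, Prod.fst_add, Prod.snd_add,
    Prod.smul_fst, Prod.smul_snd, smul_eq_mul]
  ring

lemma vertex_p_onT (p a b : Pt) : onT p a b p := by
  unfold onT tA tB tC tDet
  constructor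
  · simp [det2]
  constructor
  · have : det2 (a - p) (b - p) * det2 (a - p) (b - p) = det2 (a-p) (b-p) ^ 2 := by ring
    rw [this]; positivity
  · simp [det2]

lemma vertex_a_onT (p a b : Pt) : onT p a b a := by
  rw [← onT_rot]; exact vertex_p_onT a b p

lemma vertex_b_onT (p a b : Pt) : onT p a b b := by
  rw [← onT_rot, ← onT_rot]; exact vertex_p_onT b p a

lemma seg_pa_not_inT (p a b : Pt) {x : Pt} (h : x ∈ segment ℝ p a) : ¬ inT p a b x := by
  intro hin
  have h0 := tA_eq_zero_of_mem_seg b h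
  have := hin.1
  rw [h0] at this
  simpa using this

lemma seg_ab_not_inT (p a b : Pt) {x : Pt} (h : x ∈ segment ℝ a b) : ¬ inT p a b x := by
  rw [← inT_rot]; exact seg_pa_not_inT a b p h

lemma seg_bp_not_inT (p a b : Pt) {x : Pt} (h : x ∈ segment ℝ b p) : ¬ inT p a b x := by
  rw [← inT_rot, ← inT_rot]; exact seg_pa_not_inT b p a h

lemma vertex_p_not_inT (p a b : Pt) : ¬ inT p a b p :=
  seg_pa_not_inT p a b (left_mem_segment ℝ p a)

lemma vertex_a_not_inT (p a b : Pt) : ¬ inT p a b a :=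
  seg_pa_not_inT p a b (right_mem_segment ℝ p a)

lemma vertex_b_not_inT (p a b : Pt) : ¬ inT p a b b :=
  seg_ab_not_inT p a b (right_mem_segment ℝ a b)


lemma tA_continuous (p a b : Pt) : Continuous (fun x => tA p a b x) := by
  unfold tA det2
  fun_prop

lemma tB_continuous (p a b : Pt) : Continuous (fun x => tB p a b x) := by
  unfold tB det2; fun_prop

lemma tC_continuous (p a b : Pt) : Continuous (fun x => tC p a b x) := by
  unfold tC det2; fun_prop

lemma inT_isOpen (p a b : Pt) : IsOpen {x | inT p a b x} := by
  unfold inT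
  apply IsOpen.inter
  · exact isOpen_lt continuous_const (((tA_continuous p a b).mul continuous_const))
  apply IsOpen.inter
  · exact isOpen_lt continuous_const (((tB_continuous p a b).mul continuous_const))
  · exact isOpen_lt continuous_const (((tC_continuous p a b).mul continuous_const))

lemma onT_isClosed (p a b : Pt) : IsClosed {x | onT p a b x} := by
  unfold onT
  apply IsClosed.inter
  · exact isClosed_le continuous_const (((tA_continuous p a b).mul continuous_const))
  apply IsClosed.inter
  · exact isClosed_le continuous_const (((tB_continuous p a b).mul continuous_const))
  · exact isClosed_le continuous_const (((tC_continuous p a b).mul continuous_const))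

lemma inT_convex (p a b : Pt) : Convex ℝ {x | inT p a b x} := by
  intro x hx y hy s t hs ht hst
  refine ⟨?_, ?_, ?_⟩
  · rw [tA_combo p a b x y s t hst, add_mul]
    rcases eq_or_lt_of_le hs with h|h
    · subst h; simp only [zero_mul, zero_add]
      have ht1 : t = 1 := by linarith
      subst ht1; simpa using hy.1
    · rcases eq_or_lt_of_le ht with h2|h2
      · rw [← h2]; simp only [zero_mul, add_zero]
        have hs1 : s = 1 := by linarith
        rw [hs1, one_mul]
        exact hx.1
      · have := hx.1; have := hy.1; nlinarith
  · rw [tB_combo p a b x y s t hst, add_mul]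
    rcases eq_or_lt_of_le hs with h|h
    · subst h; simp only [zero_mul, zero_add]
      have ht1 : t = 1 := by linarith
      subst ht1; simpa using hy.2.1
    · rcases eq_or_lt_of_le ht with h2|h2
      · rw [← h2]; simp only [zero_mul, add_zero]
        have hs1 : s = 1 := by linarith
        rw [hs1, one_mul]
        exact hx.2.1
      · have := hx.2.1; have := hy.2.1; nlinarith
  · rw [tC_combo p a b x y s t hst, add_mul]
    rcases eq_or_lt_of_le hs with h|h
    · subst h; simp only [zero_mul, zero_add]
      have ht1 : t = 1 := by linarith
      subst ht1; simpa using hy.2.2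
    · rcases eq_or_lt_of_le ht with h2|h2
      · rw [← h2]; simp only [zero_mul, add_zero]
        have hs1 : s = 1 := by linarith
        rw [hs1, one_mul]
        exact hx.2.2
      · have := hx.2.2; have := hy.2.2; nlinarith

/-- if coordinates collapse at a vertex we recover the vertex -/
lemma eq_vertex_of_coords {p a b x : Pt} (hΔ : tDet p a b ≠ 0)
    (hac : tA p a b x = 0) (hcc : tC p a b x = 0) : x = p := by
  have hv := vec_id p a b x
  rw [hac, hcc] at hv
  have hb : tB p a b x = tDet p a b := by
    have := sum_id p a b x
    rw [hac, hcc] at this; linarith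
  rw [hb] at hv
  simp only [zero_smul, add_zero, zero_add] at hv
  exact (smul_right_injective Pt hΔ hv).symm

/-- a point of the closed triangle not on the boundary segments is interior -/
lemma inT_of_onT_not_segs {p a b x : Pt} (hΔ : tDet p a b ≠ 0)
    (hon : onT p a b x) (hseg : x ∉ segsT p a b) : inT p a b x := by
  -- key: show each coordinate strictly positive; if zero, x on a segment
  by_contra hni
  have key : ∀ (p' a' b' : Pt), tDet p' a' b' ≠ 0 → onT p' a' b' x →
      tA p' a' b' x * tDet p' a' b' ≤ 0 → x ∈ segment ℝ p' a' := by
    intro p' a' b' hΔ' hon' hA0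
    have h0 : tA p' a' b' x = 0 := by
      rcases hon' with ⟨h1, _, _⟩
      have : tA p' a' b' x * tDet p' a' b' = 0 := le_antisymm hA0 h1
      exact (mul_eq_zero.mp this).resolve_right hΔ'
    -- x collinear with p', a'; parametrize
    have hpa : a' - p' ≠ 0 := by
      intro h
      apply hΔ'
      have : a' = p' := by
        have := sub_eq_zero.mp h; exact this
      rw [this] at *
      simp [tDet, det2]
    -- det2 (a'-p') (x-p') = 0
    have hcol : det2 (a' - p') (x - p') = 0 := by
      have : tA p' a' b' x = det2 (a' - p') (x - p') := by
        simp only [tA, det2, Prod.fst_sub, Prod.snd_sub]; ring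
      rw [← this, h0]
    -- get s with x = p' + s • (a' - p')
    obtain ⟨s, hs⟩ : ∃ s : ℝ, x - p' = s • (a' - p') := by
      have hcol' : (a'.1 - p'.1) * (x.2 - p'.2) - (a'.2 - p'.2) * (x.1 - p'.1) = 0 := by
        unfold det2 at hcol
        simpa [Prod.fst_sub, Prod.snd_sub] using hcol
      rcases em (a'.1 - p'.1 = 0) with h1|h1
      · have h2 : a'.2 - p'.2 ≠ 0 := by
          intro h2
          apply hpa
          apply Prod.ext <;> simp only [Prod.fst_sub, Prod.snd_sub, Prod.fst_zero, Prod.snd_zero]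
          · linarith
          · linarith
        refine ⟨(x.2 - p'.2) / (a'.2 - p'.2), Prod.ext ?_ ?_⟩
        · simp only [Prod.fst_sub, Prod.smul_fst, smul_eq_mul]
          rw [h1, mul_zero]
          rw [h1, zero_mul] at hcol'
          rcases mul_eq_zero.mp (show (a'.2 - p'.2) * (x.1 - p'.1) = 0 by linarith) with h|h
          · exact absurd h h2
          · exact h
        · simp only [Prod.snd_sub, Prod.smul_snd, smul_eq_mul]
          rw [div_mul_cancel₀ _ h2]
      · refine ⟨(x.1 - p'.1) / (a'.1 - p'.1), Prod.ext ?_ ?_⟩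
        · simp only [Prod.fst_sub, Prod.smul_fst, smul_eq_mul]
          rw [div_mul_cancel₀ _ h1]
        · simp only [Prod.snd_sub, Prod.smul_snd, smul_eq_mul]
          field_simp
          linear_combination hcol'
    have hx : x = p' + s • (a' - p') := by
      rw [← hs]; abel
    -- compute tB, tC at x
    have hB : tB p' a' b' x = (1 - s) * tDet p' a' b' := by
      rw [hx]
      simp only [tB, tDet, det2, Prod.fst_sub, Prod.snd_sub, Prod.fst_add, Prod.snd_add,
        Prod.smul_fst, Prod.smul_snd, smul_eq_mul]
      ring
    have hC : tC p' a' b' x = s * tDet p' a' b' := by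
      rw [hx]
      simp only [tC, tDet, det2, Prod.fst_sub, Prod.snd_sub, Prod.fst_add, Prod.snd_add,
        Prod.smul_fst, Prod.smul_snd, smul_eq_mul]
      ring
    have hΔsq : 0 < tDet p' a' b' ^ 2 :=
      lt_of_le_of_ne (sq_nonneg _) (Ne.symm (pow_ne_zero 2 hΔ'))
    have hs0 : 0 ≤ s := by
      have h := hon'.2.2
      rw [hC] at h
      nlinarith
    have hs1 : s ≤ 1 := by
      have h := hon'.2.1
      rw [hB] at h
      nlinarith
    rw [segment_eq_image']
    exact ⟨s, ⟨hs0, hs1⟩, hx.symm⟩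
  rcases eq_or_lt_of_le hon.1 with h1|h1
  · exact hseg (Or.inl (Or.inl (key p a b hΔ hon (le_of_eq h1.symm))))
  rcases eq_or_lt_of_le hon.2.1 with h2|h2
  · have := key a b p (by rw [tDet_rot]; exact hΔ) (by rw [onT_rot]; exact hon)
      (by rw [tA_rot, tDet_rot]; exact le_of_eq h2.symm)
    exact hseg (Or.inl (Or.inr this))
  rcases eq_or_lt_of_le hon.2.2 with h3|h3
  · have := key b p a (by rw [tDet_rot, tDet_rot]; exact hΔ)
      (by rw [onT_rot, onT_rot]; exact hon)
      (by rw [tA_rot, tB_rot, tDet_rot, tDet_rot]; exact le_of_eq h3.symm)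
    exact hseg (Or.inr this)
  exact hni ⟨h1, h2, h3⟩


lemma subset_diff_inter_empty {s t : Set Pt} {w : Pt} (h : s ∩ t ⊆ {w}) :
    (s \ {w}) ∩ t = ∅ := by
  ext z
  simp only [Set.mem_inter_iff, Set.mem_diff, Set.mem_singleton_iff, Set.mem_empty_iff_false,
    iff_false]
  rintro ⟨⟨hzs, hzw⟩, hzt⟩
  exact hzw (h ⟨hzs, hzt⟩)

lemma dichotomy {p a b : Pt} (hΔ : tDet p a b ≠ 0) {s : Set Pt}
    (hconn : IsPreconnected s) (hdisj : s ∩ segsT p a b = ∅) :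
    (∀ z ∈ s, inT p a b z) ∨ (∀ z ∈ s, ¬ onT p a b z) := by
  by_contra h
  push_neg at h
  obtain ⟨⟨z1, hz1s, hz1⟩, ⟨z2, hz2s, hz2⟩⟩ := h
  have hnm : ∀ z ∈ s, z ∉ segsT p a b := by
    intro z hz hzseg
    have : z ∈ s ∩ segsT p a b := ⟨hz, hzseg⟩
    rw [hdisj] at this
    exact this
  have hsub : s ⊆ {x | inT p a b x} ∪ {x | onT p a b x}ᶜ := by
    intro z hz
    by_cases hzon : onT p a b z
    · exact Or.inl (inT_of_onT_not_segs hΔ hzon (hnm z hz))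
    · exact Or.inr hzon
  have h1 : (s ∩ {x | inT p a b x}).Nonempty := by
    refine ⟨z2, hz2s, ?_⟩
    have : z2 ∉ segsT p a b := hnm z2 hz2s
    exact inT_of_onT_not_segs hΔ hz2 this
  have h2 : (s ∩ {x | onT p a b x}ᶜ).Nonempty := by
    refine ⟨z1, hz1s, ?_⟩
    intro hon
    exact hz1 (inT_of_onT_not_segs hΔ hon (hnm z1 hz1s))
  obtain ⟨z, _, hzin, hzout⟩ := hconn _ _ (inT_isOpen p a b)
    (onT_isClosed p a b).isOpen_compl hsub h1 h2
  exact hzout hzin.onT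

lemma seg_preconnected (x y : Pt) : IsPreconnected (segment ℝ x y) :=
  (convex_segment x y).isPreconnected

lemma hseg_preconnected {v y : Pt} (hvy : v ≠ y) :
    IsPreconnected (segment ℝ v y \ {v}) := by
  have heq : segment ℝ v y \ {v} = (AffineMap.lineMap v y : ℝ →ᵃ[ℝ] Pt) '' Set.Ioc (0:ℝ) 1 := by
    rw [segment_eq_image_lineMap]
    ext z
    simp only [Set.mem_diff, Set.mem_image, Set.mem_singleton_iff, Set.mem_Icc, Set.mem_Ioc]
    constructor
    · rintro ⟨⟨t, ⟨ht0, ht1⟩, rfl⟩, hne⟩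
      refine ⟨t, ⟨?_, ht1⟩, rfl⟩
      rcases eq_or_lt_of_le ht0 with h|h
      · exfalso; apply hne; rw [← h]; simp
      · exact h
    · rintro ⟨t, ⟨ht0, ht1⟩, rfl⟩
      refine ⟨⟨t, ⟨le_of_lt ht0, ht1⟩, rfl⟩, ?_⟩
      intro hv
      rw [AffineMap.lineMap_apply_module] at hv
      have : t • (y - v) = 0 := by
        have : (1 - t) • v + t • y - v = 0 := by rw [hv]; abel
        rw [← this]; rw [smul_sub]; module
      rcases smul_eq_zero.mp this with h|h
      · exact (ne_of_gt ht0) h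
      · exact hvy (by rw [sub_eq_zero] at h; exact h.symm)
  rw [heq]
  exact ((convex_Ioc (0:ℝ) 1).affine_image _).isPreconnected

/-- dichotomy for a full segment -/
lemma dich_seg {p a b : Pt} (hΔ : tDet p a b ≠ 0) (x y : Pt)
    (h1 : segment ℝ x y ∩ segment ℝ p a = ∅)
    (h2 : segment ℝ x y ∩ segment ℝ a b = ∅)
    (h3 : segment ℝ x y ∩ segment ℝ b p = ∅) :
    (∀ z ∈ segment ℝ x y, inT p a b z) ∨ (∀ z ∈ segment ℝ x y, ¬ onT p a b z) := by
  apply dichotomy hΔ (seg_preconnected x y)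
  unfold segsT
  rw [Set.inter_union_distrib_left, Set.inter_union_distrib_left, h1, h2, h3]
  simp

/-- dichotomy for a segment minus one endpoint -/
lemma dich_hseg {p a b : Pt} (hΔ : tDet p a b ≠ 0) {v y : Pt} (hvy : v ≠ y)
    (h1 : (segment ℝ v y \ {v}) ∩ segment ℝ p a = ∅)
    (h2 : (segment ℝ v y \ {v}) ∩ segment ℝ a b = ∅)
    (h3 : (segment ℝ v y \ {v}) ∩ segment ℝ b p = ∅) :
    (∀ z ∈ segment ℝ v y \ {v}, inT p a b z) ∨
      (∀ z ∈ segment ℝ v y \ {v}, ¬ onT p a b z) := by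
  apply dichotomy hΔ (hseg_preconnected hvy)
  unfold segsT
  rw [Set.inter_union_distrib_left, Set.inter_union_distrib_left, h1, h2, h3]
  simp

lemma mem_hseg_self {v y : Pt} (hvy : v ≠ y) : y ∈ segment ℝ v y \ {v} :=
  ⟨right_mem_segment ℝ v y, fun h => hvy (by simpa using h.symm)⟩

/-- strict mixing : interior point mixed with closed point stays interior -/
lemma mix_in {p a b g v : Pt} {θ : ℝ} (hθ0 : 0 < θ) (hθ1 : θ ≤ 1)
    (hg : inT p a b g) (hv : onT p a b v) : inT p a b (θ • g + (1 - θ) • v) := by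
  have h1 := tA_combo p a b g v θ (1 - θ) (by ring)
  have h2 := tB_combo p a b g v θ (1 - θ) (by ring)
  have h3 := tC_combo p a b g v θ (1 - θ) (by ring)
  refine ⟨?_, ?_, ?_⟩
  · rw [h1]; have := hg.1; have := hv.1; nlinarith
  · rw [h2]; have := hg.2.1; have := hv.2.1; nlinarith
  · rw [h3]; have := hg.2.2; have := hv.2.2; nlinarith

lemma centroid_inT {p a b : Pt} (hΔ : tDet p a b ≠ 0) :
    inT p a b ((3:ℝ)⁻¹ • (p + a + b)) := by
  have hΔsq : 0 < tDet p a b ^ 2 := lt_of_le_of_ne (sq_nonneg _) (Ne.symm (pow_ne_zero 2 hΔ))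
  have hA : tA p a b ((3:ℝ)⁻¹ • (p + a + b)) = tDet p a b / 3 := by
    simp only [tA, tDet, det2, Prod.fst_sub, Prod.snd_sub, Prod.fst_add, Prod.snd_add,
      Prod.smul_fst, Prod.smul_snd, smul_eq_mul]
    ring
  have hB : tB p a b ((3:ℝ)⁻¹ • (p + a + b)) = tDet p a b / 3 := by
    simp only [tB, tDet, det2, Prod.fst_sub, Prod.snd_sub, Prod.fst_add, Prod.snd_add,
      Prod.smul_fst, Prod.smul_snd, smul_eq_mul]
    ring
  have hC : tC p a b ((3:ℝ)⁻¹ • (p + a + b)) = tDet p a b / 3 := by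
    simp only [tC, tDet, det2, Prod.fst_sub, Prod.snd_sub, Prod.fst_add, Prod.snd_add,
      Prod.smul_fst, Prod.smul_snd, smul_eq_mul]
    ring
  refine ⟨?_, ?_, ?_⟩ <;> [rw [hA]; rw [hB]; rw [hC]] <;> nlinarith

lemma theta_lemma (C K : ℝ) (hK : K < 0) :
    ∃ θ : ℝ, 0 < θ ∧ θ ≤ 1 ∧ θ * C + (1 - θ) * K < 0 := by
  rcases le_or_gt C 0 with h|h
  · exact ⟨1/2, by norm_num, by norm_num, by nlinarith⟩
  · have hCK : 0 < C - K := by linarith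
    refine ⟨(-K)/(2*(C-K)), div_pos (by linarith) (by linarith), ?_, ?_⟩
    · rw [div_le_one (by positivity)]
      linarith
    · have hval : (-K)/(2*(C-K)) * (C - K) = -K/2 := by
        field_simp
      nlinarith [hval]

/-- if a vertex of U fails onT for T, then the interior of U contains a point failing onT T -/
lemma exists_inT_not_onT {p a b q r w : Pt} (hΔ' : tDet q r w ≠ 0)
    (hq : ¬ onT p a b q) :
    ∃ y, inT q r w y ∧ ¬ onT p a b y := by
  set g := (3:ℝ)⁻¹ • (q + r + w) with hg
  have hgin : inT q r w g := centroid_inT hΔ'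
  have hqon : onT q r w q := vertex_p_onT q r w
  have key : ∀ (φ : Pt → ℝ), (∀ x y s t, s + t = 1 → φ (s • x + t • y) = s * φ x + t * φ y) →
      φ q < 0 → ∃ y, inT q r w y ∧ φ y < 0 := by
    intro φ hφ hneg
    obtain ⟨θ, hθ0, hθ1, hval⟩ := theta_lemma (φ g) (φ q) hneg
    refine ⟨θ • g + (1 - θ) • q, mix_in hθ0 hθ1 hgin hqon, ?_⟩
    rw [hφ g q θ (1 - θ) (by ring)]
    exact hval
  unfold onT at hq
  rcases not_and_or.mp hq with h1|h23
  · push_neg at h1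
    obtain ⟨y, hy1, hy2⟩ := key (fun x => tA p a b x * tDet p a b)
      (fun x y s t hst => by rw [tA_combo p a b x y s t hst]; ring) h1
    exact ⟨y, hy1, fun hon => absurd hon.1 (not_le.mpr hy2)⟩
  rcases not_and_or.mp h23 with h2|h3
  · push_neg at h2
    obtain ⟨y, hy1, hy2⟩ := key (fun x => tB p a b x * tDet p a b)
      (fun x y s t hst => by rw [tB_combo p a b x y s t hst]; ring) h2
    exact ⟨y, hy1, fun hon => absurd hon.2.1 (not_le.mpr hy2)⟩
  · push_neg at h3
    obtain ⟨y, hy1, hy2⟩ := key (fun x => tC p a b x * tDet p a b)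
      (fun x y s t hst => by rw [tC_combo p a b x y s t hst]; ring) h3
    exact ⟨y, hy1, fun hon => absurd hon.2.2 (not_le.mpr hy2)⟩

/-- interiors of two triangles are disjoint provided a vertex of U is outside T
and the edges of T avoid the interior of U -/
lemma disjoint_int {p a b q r w : Pt} (hΔ : tDet p a b ≠ 0) (hΔ' : tDet q r w ≠ 0)
    (hvout : ¬ onT p a b q)
    (e1 : ∀ z ∈ segment ℝ p a, ¬ inT q r w z)
    (e2 : ∀ z ∈ segment ℝ a b, ¬ inT q r w z)
    (e3 : ∀ z ∈ segment ℝ b p, ¬ inT q r w z) :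
    ∀ z, inT q r w z → ¬ inT p a b z := by
  intro z hzU hzT
  have hsub : {x | inT q r w x} ⊆ {x | inT p a b x} ∪ {x | onT p a b x}ᶜ := by
    intro x hx
    by_cases h : onT p a b x
    · refine Or.inl (inT_of_onT_not_segs hΔ h ?_)
      rintro (hs | hs)
      · rcases hs with hs|hs
        · exact e1 x hs hx
        · exact e2 x hs hx
      · exact e3 x hs hx
    · exact Or.inr h
  obtain ⟨y, hyU, hyout⟩ := exists_inT_not_onT hΔ' hvout
  obtain ⟨z0, _, hz0in, hz0out⟩ := (inT_convex q r w).isPreconnected _ _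
    (inT_isOpen p a b) (onT_isClosed p a b).isOpen_compl hsub
    ⟨z, hzU, hzT⟩ ⟨y, hyU, hyout⟩
  exact hz0out hz0in.onT


/-! ### combination lemmas and extreme points -/

lemma tA_comb3 (p a b q r w z : Pt) (c1 c2 c3 : ℝ)
    (h1 : c1 * q.1 + c2 * r.1 + c3 * w.1 = (c1 + c2 + c3) * z.1)
    (h2 : c1 * q.2 + c2 * r.2 + c3 * w.2 = (c1 + c2 + c3) * z.2) :
    c1 * tA p a b q + c2 * tA p a b r + c3 * tA p a b w = (c1 + c2 + c3) * tA p a b z := by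
  simp only [tA, det2, Prod.fst_sub, Prod.snd_sub]
  linear_combination (p.2 - a.2) * h1 + (a.1 - p.1) * h2

lemma vec_id_fst (q r w z : Pt) :
    tB q r w z * q.1 + tC q r w z * r.1 + tA q r w z * w.1 = tDet q r w * z.1 := by
  have := congrArg Prod.fst (vec_id q r w z)
  simpa [Prod.fst_add, Prod.smul_fst, smul_eq_mul] using this

lemma vec_id_snd (q r w z : Pt) :
    tB q r w z * q.2 + tC q r w z * r.2 + tA q r w z * w.2 = tDet q r w * z.2 := by
  have := congrArg Prod.snd (vec_id q r w z)
  simpa [Prod.snd_add, Prod.smul_snd, smul_eq_mul] using this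

section combs

variable {p a b q r w : Pt}

/-- coefficients for a point z of the closed triangle (q,r,w), scaled by Δ'. -/
private lemma comb_data (hΔ' : tDet q r w ≠ 0) (z : Pt) :
    (tB q r w z * tDet q r w) * q.1 + (tC q r w z * tDet q r w) * r.1 +
      (tA q r w z * tDet q r w) * w.1 =
      ((tB q r w z * tDet q r w) + (tC q r w z * tDet q r w) + (tA q r w z * tDet q r w)) * z.1 ∧
    (tB q r w z * tDet q r w) * q.2 + (tC q r w z * tDet q r w) * r.2 +
      (tA q r w z * tDet q r w) * w.2 =
      ((tB q r w z * tDet q r w) + (tC q r w z * tDet q r w) + (tA q r w z * tDet q r w)) * z.2 := by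
  have hs := sum_id q r w z
  constructor
  · have h := vec_id_fst q r w z
    have : (tB q r w z + tC q r w z + tA q r w z) = tDet q r w := by linarith
    rw [show (tB q r w z * tDet q r w) + (tC q r w z * tDet q r w) + (tA q r w z * tDet q r w)
        = tDet q r w * tDet q r w by linear_combination tDet q r w * this]
    linear_combination tDet q r w * h
  · have h := vec_id_snd q r w z
    have : (tB q r w z + tC q r w z + tA q r w z) = tDet q r w := by linarith
    rw [show (tB q r w z * tDet q r w) + (tC q r w z * tDet q r w) + (tA q r w z * tDet q r w)
        = tDet q r w * tDet q r w by linear_combination tDet q r w * this]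
    linear_combination tDet q r w * h

lemma onT_subset (hΔ : tDet p a b ≠ 0) (hΔ' : tDet q r w ≠ 0)
    (hq : onT p a b q) (hr : onT p a b r) (hw : onT p a b w) :
    ∀ z, onT q r w z → onT p a b z := by
  intro z hz
  obtain ⟨h1, h2⟩ := comb_data hΔ' z
  set c1 := tB q r w z * tDet q r w with hc1
  set c2 := tC q r w z * tDet q r w with hc2
  set c3 := tA q r w z * tDet q r w with hc3
  have hc1p : 0 ≤ c1 := hz.2.1
  have hc2p : 0 ≤ c2 := hz.2.2
  have hc3p : 0 ≤ c3 := hz.1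
  have hsum : c1 + c2 + c3 = tDet q r w ^ 2 := by
    have h := sum_id q r w z
    rw [hc1, hc2, hc3]; linear_combination tDet q r w * h
  have hΔsq : 0 < tDet q r w ^ 2 := lt_of_le_of_ne (sq_nonneg _) (Ne.symm (pow_ne_zero 2 hΔ'))
  have key : ∀ (p' a' b' : Pt), 0 ≤ tA p' a' b' q * tDet p' a' b' →
      0 ≤ tA p' a' b' r * tDet p' a' b' → 0 ≤ tA p' a' b' w * tDet p' a' b' →
      0 ≤ tA p' a' b' z * tDet p' a' b' := by
    intro p' a' b' k1 k2 k3
    have hcomb := tA_comb3 p' a' b' q r w z c1 c2 c3 h1 h2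
    rw [hsum] at hcomb
    have hcombΔ : c1 * (tA p' a' b' q * tDet p' a' b') + c2 * (tA p' a' b' r * tDet p' a' b')
        + c3 * (tA p' a' b' w * tDet p' a' b')
        = tDet q r w ^ 2 * (tA p' a' b' z * tDet p' a' b') := by
      linear_combination (tDet p' a' b') * hcomb
    nlinarith [hcombΔ, mul_nonneg hc1p k1, mul_nonneg hc2p k2, mul_nonneg hc3p k3, hΔsq]
  refine ⟨key p a b hq.1 hr.1 hw.1, ?_, ?_⟩
  · have := key a b p (by rw [tA_rot, tDet_rot]; exact hq.2.1)
      (by rw [tA_rot, tDet_rot]; exact hr.2.1) (by rw [tA_rot, tDet_rot]; exact hw.2.1)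
    rw [tA_rot, tDet_rot] at this
    exact this
  · have := key b p a (by rw [tA_rot, tB_rot, tDet_rot, tDet_rot]; exact hq.2.2)
      (by rw [tA_rot, tB_rot, tDet_rot, tDet_rot]; exact hr.2.2)
      (by rw [tA_rot, tB_rot, tDet_rot, tDet_rot]; exact hw.2.2)
    rw [tA_rot, tB_rot, tDet_rot, tDet_rot] at this
    exact this

lemma extreme_vertex (hΔ : tDet p a b ≠ 0) (hΔ' : tDet q r w ≠ 0)
    (hq : onT p a b q) (hr : onT p a b r) (hw : onT p a b w)
    (hp : onT q r w p) (hpq : p ≠ q) (hpr : p ≠ r) (hpw : p ≠ w) : False := by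
  obtain ⟨h1, h2⟩ := comb_data hΔ' p
  set c1 := tB q r w p * tDet q r w with hc1
  set c2 := tC q r w p * tDet q r w with hc2
  set c3 := tA q r w p * tDet q r w with hc3
  have hc1p : 0 ≤ c1 := hp.2.1
  have hc2p : 0 ≤ c2 := hp.2.2
  have hc3p : 0 ≤ c3 := hp.1
  have hsum : c1 + c2 + c3 = tDet q r w ^ 2 := by
    have h := sum_id q r w p
    rw [hc1, hc2, hc3]; linear_combination tDet q r w * h
  have hΔsq : 0 < tDet q r w ^ 2 := lt_of_le_of_ne (sq_nonneg _) (Ne.symm (pow_ne_zero 2 hΔ'))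
  -- H y := (tA p a b y + tC p a b y) * tDet p a b
  have hAp : tA p a b p = 0 := by simp [tA, det2]
  have hCp : tC p a b p = 0 := by simp [tC, det2]
  have eqA := tA_comb3 p a b q r w p c1 c2 c3 h1 h2
  have eqC := tA_comb3 b p a q r w p c1 c2 c3 h1 h2
  have eqC' : c1 * tC p a b q + c2 * tC p a b r + c3 * tC p a b w
      = (c1 + c2 + c3) * tC p a b p := eqC
  have hzero : c1 * ((tA p a b q + tC p a b q) * tDet p a b)
      + c2 * ((tA p a b r + tC p a b r) * tDet p a b)
      + c3 * ((tA p a b w + tC p a b w) * tDet p a b) = 0 := by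
    rw [hsum] at eqA eqC'
    rw [hAp] at eqA
    rw [hCp] at eqC'
    linear_combination tDet p a b * eqA + tDet p a b * eqC'
  have hvert : ∀ y, onT p a b y → (tA p a b y + tC p a b y) * tDet p a b = 0 → y = p := by
    intro y hy h0
    have hd : tA p a b y * tDet p a b + tC p a b y * tDet p a b = 0 := by
      linear_combination h0
    have hA0 : tA p a b y * tDet p a b = 0 := by linarith [hy.1, hy.2.2]
    have hC0 : tC p a b y * tDet p a b = 0 := by linarith [hy.1, hy.2.2]
    exact eq_vertex_of_coords hΔ ((mul_eq_zero.mp hA0).resolve_right hΔ)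
      ((mul_eq_zero.mp hC0).resolve_right hΔ)
  have hHq : 0 ≤ (tA p a b q + tC p a b q) * tDet p a b := by
    have hcl : (tA p a b q + tC p a b q) * tDet p a b
        = tA p a b q * tDet p a b + tC p a b q * tDet p a b := by ring
    rw [hcl]
    exact add_nonneg hq.1 hq.2.2
  have hHr : 0 ≤ (tA p a b r + tC p a b r) * tDet p a b := by
    have hcl : (tA p a b r + tC p a b r) * tDet p a b
        = tA p a b r * tDet p a b + tC p a b r * tDet p a b := by ring
    rw [hcl]
    exact add_nonneg hr.1 hr.2.2
  have hHw : 0 ≤ (tA p a b w + tC p a b w) * tDet p a b := by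
    have hcl : (tA p a b w + tC p a b w) * tDet p a b
        = tA p a b w * tDet p a b + tC p a b w * tDet p a b := by ring
    rw [hcl]
    exact add_nonneg hw.1 hw.2.2
  rcases lt_or_eq_of_le hc1p with hcp|hcp
  · apply hpq
    symm
    apply hvert q hq
    nlinarith [mul_nonneg hc2p hHr, mul_nonneg hc3p hHw, mul_nonneg (le_of_lt hcp) hHq]
  · rcases lt_or_eq_of_le hc2p with hcp2|hcp2
    · apply hpr
      symm
      apply hvert r hr
      nlinarith [mul_nonneg hc1p hHq, mul_nonneg hc3p hHw]
    · rcases lt_or_eq_of_le hc3p with hcp3|hcp3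
      · apply hpw
        symm
        apply hvert w hw
        nlinarith [mul_nonneg hc1p hHq, mul_nonneg hc2p hHr]
      · rw [← hcp, ← hcp2, ← hcp3] at hsum
        simp at hsum
        nlinarith [hsum]

end combs


/-! ### ray-crossing parity -/

lemma exists_smul_of_det_zero {u w : Pt} (hu : u ≠ 0) (h : det2 u w = 0) :
    ∃ c : ℝ, w = c • u := by
  unfold det2 at h
  rcases em (u.1 = 0) with h1|h1
  · have h2 : u.2 ≠ 0 := fun h2 => hu (Prod.ext h1 h2)
    refine ⟨w.2 / u.2, Prod.ext ?_ ?_⟩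
    · simp only [Prod.smul_fst, smul_eq_mul]
      rw [h1] at h ⊢
      rw [mul_zero]
      rcases mul_eq_zero.mp (show u.2 * w.1 = 0 by linarith) with h'|h'
      · exact absurd h' h2
      · exact h'
    · simp only [Prod.smul_snd, smul_eq_mul]
      rw [div_mul_cancel₀ _ h2]
  · refine ⟨w.1 / u.1, Prod.ext ?_ ?_⟩
    · simp only [Prod.smul_fst, smul_eq_mul]
      rw [div_mul_cancel₀ _ h1]
    · simp only [Prod.smul_snd, smul_eq_mul]
      field_simp
      linear_combination h

lemma det2_smul_right (d u : Pt) (c : ℝ) : det2 d (c • u) = c * det2 d u := by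
  simp only [det2, Prod.smul_fst, Prod.smul_snd, smul_eq_mul]; ring

/-- x collinear with u,v and (u,v) on opposite sides of the d-line through x :
x lies between u and v. -/
lemma mem_seg_of_collinear_opp {x d u v : Pt}
    (hcol : det2 (u - x) (v - x) = 0)
    (hopp : det2 d (u - x) * det2 d (v - x) < 0) : x ∈ segment ℝ u v := by
  have hu : u - x ≠ 0 := by
    intro h
    rw [h] at hopp
    simp [det2] at hopp
  obtain ⟨c, hc⟩ := exists_smul_of_det_zero hu hcol
  have hfv : det2 d (v - x) = c * det2 d (u - x) := by rw [hc, det2_smul_right]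
  have hcneg : c < 0 := by
    rw [hfv] at hopp
    nlinarith [sq_nonneg (det2 d (u - x))]
  have h1c : (0:ℝ) < 1 - c := by linarith
  refine ⟨-c / (1 - c), 1 / (1 - c), le_of_lt (div_pos (by linarith : (0:ℝ) < -c) h1c), by positivity, by field_simp; ring, ?_⟩
  have hv : v = x + c • (u - x) := by
    have : v - x = c • (u - x) := hc
    rw [← this]; abel
  rw [hv]
  apply Prod.ext
  · simp only [Prod.smul_fst, Prod.fst_add, Prod.fst_sub, smul_eq_mul]
    field_simp
    ring
  · simp only [Prod.smul_snd, Prod.snd_add, Prod.snd_sub, smul_eq_mul]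
    field_simp
    ring

noncomputable def crossInd (x d u v : Pt) : ZMod 2 :=
  if det2 d (u - x) * det2 d (v - x) < 0 ∧
     0 < det2 (u - x) (v - x) * (det2 d (v - x) - det2 d (u - x)) then 1 else 0

lemma crossInd_symm (x d u v : Pt) : crossInd x d u v = crossInd x d v u := by
  unfold crossInd
  have h1 : det2 d (u - x) * det2 d (v - x) = det2 d (v - x) * det2 d (u - x) :=
    mul_comm _ _
  have h2 : det2 (u - x) (v - x) * (det2 d (v - x) - det2 d (u - x))
      = det2 (v - x) (u - x) * (det2 d (u - x) - det2 d (v - x)) := by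
    simp only [det2, Prod.fst_sub, Prod.snd_sub]; ring
  rw [h1, h2]

/-- pure-real parity helper for the lone-vertex case -/
lemma P1_lone {α β γ Δ Fp Fa Fb : ℝ}
    (hsum : α + β + γ = Δ) (hstar : β * Fp + γ * Fa + α * Fb = 0)
    (hpa : Fp * Fa < 0) (hab : 0 < Fa * Fb)
    (hα : α ≠ 0) (hγ : γ ≠ 0) :
    ((if Fp * Fa < 0 ∧ 0 < α * (Fa - Fp) then 1 else 0) +
     (if Fa * Fb < 0 ∧ 0 < β * (Fb - Fa) then 1 else 0) +
     (if Fb * Fp < 0 ∧ 0 < γ * (Fp - Fb) then 1 else 0) : ZMod 2) =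
    if 0 < α * Δ ∧ 0 < β * Δ ∧ 0 < γ * Δ then 1 else 0 := by
  rw [if_neg (by intro h; linarith [h.1] : ¬(Fa * Fb < 0 ∧ 0 < β * (Fb - Fa)))]
  rcases lt_trichotomy Fp 0 with hFp|hFp|hFp
  · -- Fp < 0, Fa > 0, Fb > 0
    have hFa : 0 < Fa := by nlinarith
    have hFb : 0 < Fb := by nlinarith
    have hbp : Fb * Fp < 0 := by nlinarith
    have hc1 : (Fp * Fa < 0 ∧ 0 < α * (Fa - Fp)) ↔ 0 < α := by
      constructor
      · rintro ⟨-, h⟩; nlinarith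
      · intro h; exact ⟨hpa, by nlinarith⟩
    have hc3 : (Fb * Fp < 0 ∧ 0 < γ * (Fp - Fb)) ↔ γ < 0 := by
      constructor
      · rintro ⟨-, h⟩; nlinarith
      · intro h; exact ⟨hbp, by nlinarith⟩
    rcases lt_trichotomy α 0 with hα'|hα'|hα'
    · rcases lt_trichotomy γ 0 with hγ'|hγ'|hγ'
      · -- α<0, γ<0 : parity 1, inside
        rw [if_neg (by rw [hc1]; exact not_lt_of_gt hα'), if_pos (hc3.mpr hγ')]
        have hβ : 0 < β * Fp := by nlinarith
        have hβneg : β < 0 := by nlinarith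
        have hΔneg : Δ < 0 := by linarith
        rw [if_pos ⟨by nlinarith, by nlinarith, by nlinarith⟩]
        decide
      · exact absurd hγ' hγ
      · -- α<0, γ>0 : parity 0, outside
        rw [if_neg (by rw [hc1]; exact not_lt_of_gt hα'), if_neg (by rw [hc3]; exact not_lt_of_gt hγ')]
        rw [if_neg ?_]
        · decide
        · rintro ⟨h1, h2, h3⟩
          nlinarith
    · exact absurd hα' hα
    · rcases lt_trichotomy γ 0 with hγ'|hγ'|hγ'
      · -- α>0, γ<0 : parity 0(1+1), outside
        rw [if_pos (hc1.mpr hα'), if_pos (hc3.mpr hγ')]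
        rw [if_neg ?_]
        · decide
        · rintro ⟨h1, h2, h3⟩
          nlinarith
      · exact absurd hγ' hγ
      · -- α>0, γ>0 : parity 1, inside
        rw [if_pos (hc1.mpr hα'), if_neg (by rw [hc3]; exact not_lt_of_gt hγ')]
        have hβ : β * Fp < 0 := by nlinarith
        have hβpos : 0 < β := by nlinarith
        have hΔpos : 0 < Δ := by linarith
        rw [if_pos ⟨by nlinarith, by nlinarith, by nlinarith⟩]
        decide
  · exfalso; rw [hFp] at hpa; simp at hpa
  · -- Fp > 0, Fa < 0, Fb < 0
    have hFa : Fa < 0 := by nlinarith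
    have hFb : Fb < 0 := by nlinarith
    have hbp : Fb * Fp < 0 := by nlinarith
    have hc1 : (Fp * Fa < 0 ∧ 0 < α * (Fa - Fp)) ↔ α < 0 := by
      constructor
      · rintro ⟨-, h⟩; nlinarith
      · intro h; exact ⟨hpa, by nlinarith⟩
    have hc3 : (Fb * Fp < 0 ∧ 0 < γ * (Fp - Fb)) ↔ 0 < γ := by
      constructor
      · rintro ⟨-, h⟩; nlinarith
      · intro h; exact ⟨hbp, by nlinarith⟩
    rcases lt_trichotomy α 0 with hα'|hα'|hα'
    · rcases lt_trichotomy γ 0 with hγ'|hγ'|hγ'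
      · -- α<0, γ<0 : 1 + 0, inside
        rw [if_pos (hc1.mpr hα'), if_neg (by rw [hc3]; exact not_lt_of_gt hγ')]
        have hβ : β * Fp < 0 := by nlinarith
        have hβneg : β < 0 := by nlinarith
        have hΔneg : Δ < 0 := by linarith
        rw [if_pos ⟨by nlinarith, by nlinarith, by nlinarith⟩]
        decide
      · exact absurd hγ' hγ
      · -- α<0, γ>0 : 1 + 1 outside
        rw [if_pos (hc1.mpr hα'), if_pos (hc3.mpr hγ')]
        rw [if_neg ?_]
        · decide
        · rintro ⟨h1, h2, h3⟩
          nlinarith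
    · exact absurd hα' hα
    · rcases lt_trichotomy γ 0 with hγ'|hγ'|hγ'
      · -- α>0, γ<0 : 0+0 outside
        rw [if_neg (by rw [hc1]; exact not_lt_of_gt hα'), if_neg (by rw [hc3]; exact not_lt_of_gt hγ')]
        rw [if_neg ?_]
        · decide
        · rintro ⟨h1, h2, h3⟩
          nlinarith
      · exact absurd hγ' hγ
      · -- α>0, γ>0 : 0 + 1 inside
        rw [if_neg (by rw [hc1]; exact not_lt_of_gt hα'), if_pos (hc3.mpr hγ')]
        have hβ : 0 < β * Fp := by nlinarith
        have hβpos : 0 < β := by nlinarith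
        have hΔpos : 0 < Δ := by linarith
        rw [if_pos ⟨by nlinarith, by nlinarith, by nlinarith⟩]
        decide


lemma star_id (p a b x d : Pt) :
    tB p a b x * det2 d (p - x) + tC p a b x * det2 d (a - x)
      + tA p a b x * det2 d (b - x) = 0 := by
  simp only [tA, tB, tC, det2, Prod.fst_sub, Prod.snd_sub]
  ring

/-- crossing parity of the ray from x in direction d with the boundary of the
triangle (p,a,b) equals the inside-indicator. -/
lemma P1 {p a b x d : Pt} (hΔ : tDet p a b ≠ 0)
    (hfp : det2 d (p - x) ≠ 0) (hfa : det2 d (a - x) ≠ 0) (hfb : det2 d (b - x) ≠ 0)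
    (hx : x ∉ segsT p a b) :
    crossInd x d p a + crossInd x d a b + crossInd x d b p
      = if inT p a b x then 1 else 0 := by
  have hsum : tA p a b x + tB p a b x + tC p a b x = tDet p a b := sum_id p a b x
  have hstar := star_id p a b x d
  have hseg1 : det2 d (p - x) * det2 d (a - x) < 0 → tA p a b x ≠ 0 := by
    intro hopp h0
    exact hx (Or.inl (Or.inl (mem_seg_of_collinear_opp h0 hopp)))
  have hseg2 : det2 d (a - x) * det2 d (b - x) < 0 → tB p a b x ≠ 0 := by
    intro hopp h0
    exact hx (Or.inl (Or.inr (mem_seg_of_collinear_opp h0 hopp)))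
  have hseg3 : det2 d (b - x) * det2 d (p - x) < 0 → tC p a b x ≠ 0 := by
    intro hopp h0
    exact hx (Or.inr (mem_seg_of_collinear_opp h0 hopp))
  have hiT : inT p a b x ↔
      (0 < tA p a b x * tDet p a b ∧ 0 < tB p a b x * tDet p a b ∧
        0 < tC p a b x * tDet p a b) := Iff.rfl
  unfold crossInd
  rcases lt_or_gt_of_ne (mul_ne_zero hfp hfa) with h12|h12 <;>
    rcases lt_or_gt_of_ne (mul_ne_zero hfa hfb) with h23|h23 <;>
      rcases lt_or_gt_of_ne (mul_ne_zero hfb hfp) with h31|h31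
  · -- (-,-,-) impossible
    exfalso
    nlinarith [sq_nonneg (det2 d (p - x) * det2 d (a - x) * det2 d (b - x)),
      mul_pos (mul_pos_of_neg_of_neg h12 h23) (neg_pos.mpr h31)]
  · -- (-,-,+) lone a
    have H := P1_lone (α := tB p a b x) (β := tC p a b x) (γ := tA p a b x)
      (Δ := tDet p a b) (Fp := det2 d (a - x)) (Fa := det2 d (b - x))
      (Fb := det2 d (p - x)) (by linarith) (by linarith) h23 h31 (hseg2 h23) (hseg1 h12)
    rw [if_congr (show (0 < tB p a b x * tDet p a b ∧ 0 < tC p a b x * tDet p a b ∧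
        0 < tA p a b x * tDet p a b) ↔ inT p a b x by rw [hiT]; tauto) rfl rfl] at H
    have e1 : det2 (a - x) (b - x) = tB p a b x := rfl
    have e2 : det2 (b - x) (p - x) = tC p a b x := rfl
    have e3 : det2 (p - x) (a - x) = tA p a b x := rfl
    rw [e1, e2, e3]
    linear_combination H
  · -- (-,+,-) lone p
    have H := P1_lone (α := tA p a b x) (β := tB p a b x) (γ := tC p a b x)
      (Δ := tDet p a b) (Fp := det2 d (p - x)) (Fa := det2 d (a - x))
      (Fb := det2 d (b - x)) (by linarith) (by linarith) h12 h23 (hseg1 h12) (hseg3 h31)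
    rw [if_congr (show (0 < tA p a b x * tDet p a b ∧ 0 < tB p a b x * tDet p a b ∧
        0 < tC p a b x * tDet p a b) ↔ inT p a b x from hiT.symm) rfl rfl] at H
    have e1 : det2 (a - x) (b - x) = tB p a b x := rfl
    have e2 : det2 (b - x) (p - x) = tC p a b x := rfl
    have e3 : det2 (p - x) (a - x) = tA p a b x := rfl
    rw [e1, e2, e3]
    linear_combination H
  · -- (-,+,+) impossible
    exfalso
    nlinarith [sq_nonneg (det2 d (p - x) * det2 d (a - x) * det2 d (b - x)),
      mul_pos h23 h31]
  · -- (+,-,-) lone b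
    have H := P1_lone (α := tC p a b x) (β := tA p a b x) (γ := tB p a b x)
      (Δ := tDet p a b) (Fp := det2 d (b - x)) (Fa := det2 d (p - x))
      (Fb := det2 d (a - x)) (by linarith) (by linarith) h31 h12 (hseg3 h31) (hseg2 h23)
    rw [if_congr (show (0 < tC p a b x * tDet p a b ∧ 0 < tA p a b x * tDet p a b ∧
        0 < tB p a b x * tDet p a b) ↔ inT p a b x by rw [hiT]; tauto) rfl rfl] at H
    have e1 : det2 (a - x) (b - x) = tB p a b x := rfl
    have e2 : det2 (b - x) (p - x) = tC p a b x := rfl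
    have e3 : det2 (p - x) (a - x) = tA p a b x := rfl
    rw [e1, e2, e3]
    linear_combination H
  · -- (+,-,+) impossible
    exfalso
    nlinarith [sq_nonneg (det2 d (p - x) * det2 d (a - x) * det2 d (b - x)),
      mul_pos h31 h12]
  · -- (+,+,-) impossible
    exfalso
    nlinarith [sq_nonneg (det2 d (p - x) * det2 d (a - x) * det2 d (b - x)),
      mul_pos h12 h23]
  · -- (+,+,+) all same sign : parity 0, outside
    rw [if_neg (fun h => by linarith [h.1]), if_neg (fun h => by linarith [h.1]),
      if_neg (fun h => by linarith [h.1])]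
    rw [if_neg ?_]
    · decide
    intro hin
    rw [hiT] at hin
    obtain ⟨k1, k2, k3⟩ := hin
    have hstarΔ : (tB p a b x * tDet p a b) * det2 d (p - x)
        + (tC p a b x * tDet p a b) * det2 d (a - x)
        + (tA p a b x * tDet p a b) * det2 d (b - x) = 0 := by
      linear_combination tDet p a b * hstar
    rcases lt_or_gt_of_ne hfp with hp'|hp'
    · have ha' : det2 d (a - x) < 0 := by nlinarith
      have hb' : det2 d (b - x) < 0 := by nlinarith
      nlinarith [mul_pos k2 (neg_pos.mpr hp'), mul_pos k3 (neg_pos.mpr ha'),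
        mul_pos k1 (neg_pos.mpr hb')]
    · have ha' : 0 < det2 d (a - x) := by nlinarith
      have hb' : 0 < det2 d (b - x) := by nlinarith
      nlinarith [mul_pos k2 hp', mul_pos k3 ha', mul_pos k1 hb']


/-! ### generic choices -/

lemma exists_generic_dir (L : List Pt) (hL : ∀ w ∈ L, w ≠ 0) :
    ∃ d : Pt, ∀ w ∈ L, det2 d w ≠ 0 := by
  obtain ⟨t, ht⟩ := Infinite.exists_notMem_finset ((L.map (fun w => w.2 / w.1)).toFinset)
  refine ⟨(1, t), ?_⟩
  intro w hw h0
  have h0' : w.2 - t * w.1 = 0 := by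
    unfold det2 at h0
    simpa using h0
  rcases em (w.1 = 0) with h1|h1
  · apply hL w hw
    apply Prod.ext h1
    rw [h1] at h0'
    simpa using h0'
  · apply ht
    simp only [List.mem_toFinset, List.mem_map]
    refine ⟨w, hw, ?_⟩
    field_simp
    linarith

lemma det_zero_of_mem_seg {u v x : Pt} (h : x ∈ segment ℝ u v) :
    det2 (x - u) (v - u) = 0 := by
  rw [segment_eq_image'] at h
  obtain ⟨θ, _, rfl⟩ := h
  simp only [det2, Prod.fst_sub, Prod.snd_sub, Prod.fst_add, Prod.snd_add,
    Prod.smul_fst, Prod.smul_snd, smul_eq_mul]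
  ring

lemma det2_shift (g w u v : Pt) (s : ℝ) :
    det2 (g + s • w - u) (v - u) = det2 (g - u) (v - u) + s * det2 w (v - u) := by
  simp only [det2, Prod.fst_sub, Prod.snd_sub, Prod.fst_add, Prod.snd_add,
    Prod.smul_fst, Prod.smul_snd, smul_eq_mul]
  ring

lemma tA_shift (p a b g w : Pt) (s : ℝ) :
    tA p a b (g + s • w) = tA p a b g + s * ((p.2 - a.2) * w.1 + (a.1 - p.1) * w.2) := by
  simp only [tA, det2, Prod.fst_sub, Prod.snd_sub, Prod.fst_add, Prod.snd_add,
    Prod.smul_fst, Prod.smul_snd, smul_eq_mul]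
  ring

lemma exists_generic_point {p a b : Pt} (hΔ : tDet p a b ≠ 0) (L : List (Pt × Pt))
    (hL : ∀ e ∈ L, e.1 ≠ e.2) :
    ∃ x : Pt, inT p a b x ∧ ∀ e ∈ L, x ∉ segment ℝ e.1 e.2 := by
  set g := (3:ℝ)⁻¹ • (p + a + b) with hg
  have hgin : inT p a b g := centroid_inT hΔ
  have hLnz : ∀ w ∈ L.map (fun e => e.2 - e.1), w ≠ 0 := by
    intro w hw
    simp only [List.mem_map] at hw
    obtain ⟨e, he, rfl⟩ := hw
    exact sub_ne_zero.mpr (hL e he).symm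
  obtain ⟨w, hwd⟩ := exists_generic_dir _ hLnz
  have hwd' : ∀ e ∈ L, det2 w (e.2 - e.1) ≠ 0 := by
    intro e he
    exact hwd _ (List.mem_map.mpr ⟨e, he, rfl⟩)
  -- helper for staying strictly inside along the perturbation
  have pos_shift : ∀ (V C s : ℝ), 0 < V → 0 < s → s < V / (|C| + 1) → 0 < V + s * C := by
    intro V C s hV hs hδ
    have h1 : s * (|C| + 1) < V := (lt_div_iff₀ (by positivity)).mp hδ
    nlinarith [neg_abs_le C, abs_nonneg C]
  set cA := ((p.2 - a.2) * w.1 + (a.1 - p.1) * w.2) * tDet p a b with hcA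
  set cB := ((a.2 - b.2) * w.1 + (b.1 - a.1) * w.2) * tDet p a b with hcB
  set cC := ((b.2 - p.2) * w.1 + (p.1 - b.1) * w.2) * tDet p a b with hcC
  set δ := min (tA p a b g * tDet p a b / (|cA| + 1))
      (min (tB p a b g * tDet p a b / (|cB| + 1))
        (tC p a b g * tDet p a b / (|cC| + 1))) with hδ
  have hδpos : 0 < δ := by
    apply lt_min
    · have := hgin.1; positivity
    apply lt_min
    · have := hgin.2.1; positivity
    · have := hgin.2.2; positivity
  set bad := (L.map fun e => (-(det2 (g - e.1) (e.2 - e.1))) / (det2 w (e.2 - e.1))).toFinset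
    with hbad
  obtain ⟨s, hsIoo, hsbad⟩ :=
    (Set.infinite_coe_iff.mp (Set.Ioo.infinite hδpos)).exists_notMem_finset bad
  obtain ⟨hs0, hsδ⟩ := hsIoo
  refine ⟨g + s • w, ⟨?_, ?_, ?_⟩, ?_⟩
  · have hsh : tA p a b (g + s • w) * tDet p a b = tA p a b g * tDet p a b + s * cA := by
      rw [tA_shift, hcA]; ring
    rw [hsh]
    exact pos_shift _ _ _ hgin.1 hs0 (lt_of_lt_of_le hsδ (min_le_left _ _))
  · have hsh : tB p a b (g + s • w) * tDet p a b = tB p a b g * tDet p a b + s * cB := by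
      rw [show ∀ y, tB p a b y = tA a b p y from fun _ => rfl, tA_shift, hcB]
      rw [show tA a b p g = tB p a b g from rfl]
      ring
    rw [hsh]
    exact pos_shift _ _ _ hgin.2.1 hs0
      (lt_of_lt_of_le hsδ ((min_le_right _ _).trans (min_le_left _ _)))
  · have hsh : tC p a b (g + s • w) * tDet p a b = tC p a b g * tDet p a b + s * cC := by
      rw [show ∀ y, tC p a b y = tA b p a y from fun _ => rfl, tA_shift, hcC]
      rw [show tA b p a g = tC p a b g from rfl]
      ring
    rw [hsh]
    exact pos_shift _ _ _ hgin.2.2 hs0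
      (lt_of_lt_of_le hsδ ((min_le_right _ _).trans (min_le_right _ _)))
  · intro e he hmem
    apply hsbad
    have h0 := det_zero_of_mem_seg hmem
    rw [det2_shift] at h0
    have hc1 := hwd' e he
    have hseq : s = (-(det2 (g - e.1) (e.2 - e.1))) / (det2 w (e.2 - e.1)) := by
      field_simp
      linarith
    rw [hbad]
    simp only [List.mem_toFinset, List.mem_map]
    exact ⟨e, he, hseq.symm⟩


/-! ### the 7-point configuration -/

structure Cfg where
  A : Fin 4 → Pt
  Q1 : Pt
  Q2 : Pt
  B : Pt
  dAA : ∀ i j, i ≠ j → A i ≠ A j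
  dQQ : Q1 ≠ Q2
  dQ1A : ∀ i, Q1 ≠ A i
  dQ2A : ∀ i, Q2 ≠ A i
  dBQ1 : B ≠ Q1
  dBQ2 : B ≠ Q2
  dBA : ∀ i, B ≠ A i
  nT : ∀ i, tDet Q1 (A i) (A (i+1)) ≠ 0
  nU : ∀ i, tDet Q2 (A i) (A (i+1)) ≠ 0
  iSS : ∀ i k, i ≠ k → segment ℝ Q1 (A i) ∩ segment ℝ Q1 (A k) ⊆ {Q1}
  iRR : ∀ i k, i ≠ k → segment ℝ Q2 (A i) ∩ segment ℝ Q2 (A k) ⊆ {Q2}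
  iSReq : ∀ i, segment ℝ Q1 (A i) ∩ segment ℝ Q2 (A i) ⊆ {A i}
  iSRne : ∀ i k, i ≠ k → segment ℝ Q1 (A i) ∩ segment ℝ Q2 (A k) = ∅
  iSP : ∀ i k, k ≠ i → k ≠ i + 1 → segment ℝ Q1 (A k) ∩ segment ℝ (A i) (A (i+1)) = ∅
  iSPl : ∀ i, segment ℝ Q1 (A i) ∩ segment ℝ (A i) (A (i+1)) ⊆ {A i}
  iSPr : ∀ i, segment ℝ Q1 (A (i+1)) ∩ segment ℝ (A i) (A (i+1)) ⊆ {A (i+1)}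
  iRP : ∀ i k, k ≠ i → k ≠ i + 1 → segment ℝ Q2 (A k) ∩ segment ℝ (A i) (A (i+1)) = ∅
  iRPl : ∀ i, segment ℝ Q2 (A i) ∩ segment ℝ (A i) (A (i+1)) ⊆ {A i}
  iRPr : ∀ i, segment ℝ Q2 (A (i+1)) ∩ segment ℝ (A i) (A (i+1)) ⊆ {A (i+1)}
  iPP : ∀ i k, k ≠ i → k ≠ i + 1 → i ≠ k + 1 →
    segment ℝ (A i) (A (i+1)) ∩ segment ℝ (A k) (A (k+1)) = ∅
  iPPadj : ∀ i, segment ℝ (A i) (A (i+1)) ∩ segment ℝ (A (i+1)) (A (i+1+1)) ⊆ {A (i+1)}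
  iB1S : ∀ i, segment ℝ B Q1 ∩ segment ℝ Q1 (A i) ⊆ {Q1}
  iB1R : ∀ i, segment ℝ B Q1 ∩ segment ℝ Q2 (A i) = ∅
  iB1P : ∀ i, segment ℝ B Q1 ∩ segment ℝ (A i) (A (i+1)) = ∅
  iB2R : ∀ i, segment ℝ B Q2 ∩ segment ℝ Q2 (A i) ⊆ {Q2}
  iB2S : ∀ i, segment ℝ B Q2 ∩ segment ℝ Q1 (A i) = ∅
  iB2P : ∀ i, segment ℝ B Q2 ∩ segment ℝ (A i) (A (i+1)) = ∅
  vQ1P : ∀ i, Q1 ∉ segment ℝ (A i) (A (i+1))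
  vQ1R : ∀ i, Q1 ∉ segment ℝ Q2 (A i)
  vQ2P : ∀ i, Q2 ∉ segment ℝ (A i) (A (i+1))
  vQ2S : ∀ i, Q2 ∉ segment ℝ Q1 (A i)
  vBP : ∀ i, B ∉ segment ℝ (A i) (A (i+1))
  vBS : ∀ i, B ∉ segment ℝ Q1 (A i)
  vBR : ∀ i, B ∉ segment ℝ Q2 (A i)
  vAS : ∀ i k, k ≠ i → A k ∉ segment ℝ Q1 (A i)
  vAR : ∀ i k, k ≠ i → A k ∉ segment ℝ Q2 (A i)
  vAP : ∀ i k, k ≠ i → k ≠ i + 1 → A k ∉ segment ℝ (A i) (A (i+1))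

namespace Cfg

def swap (c : Cfg) : Cfg where
  A := c.A
  Q1 := c.Q2
  Q2 := c.Q1
  B := c.B
  dAA := c.dAA
  dQQ := c.dQQ.symm
  dQ1A := c.dQ2A
  dQ2A := c.dQ1A
  dBQ1 := c.dBQ2
  dBQ2 := c.dBQ1
  dBA := c.dBA
  nT := c.nU
  nU := c.nT
  iSS := c.iRR
  iRR := c.iSS
  iSReq := fun i => by rw [Set.inter_comm]; exact c.iSReq i
  iSRne := fun i k h => by rw [Set.inter_comm]; exact c.iSRne k i h.symm
  iSP := c.iRP
  iSPl := c.iRPl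
  iSPr := c.iRPr
  iRP := c.iSP
  iRPl := c.iSPl
  iRPr := c.iSPr
  iPP := c.iPP
  iPPadj := c.iPPadj
  iB1S := c.iB2R
  iB1R := c.iB2S
  iB1P := c.iB2P
  iB2R := c.iB1S
  iB2S := c.iB1R
  iB2P := c.iB1P
  vQ1P := c.vQ2P
  vQ1R := c.vQ2S
  vQ2P := c.vQ1P
  vQ2S := c.vQ1R
  vBP := c.vBP
  vBS := c.vBR
  vBR := c.vBS
  vAS := c.vAR
  vAR := c.vAS
  vAP := c.vAP

/-- interior of the i-th Q1-fan triangle -/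
def inTT (c : Cfg) (i : Fin 4) (x : Pt) : Prop := inT c.Q1 (c.A i) (c.A (i+1)) x
def onTT (c : Cfg) (i : Fin 4) (x : Pt) : Prop := onT c.Q1 (c.A i) (c.A (i+1)) x
def inUU (c : Cfg) (i : Fin 4) (x : Pt) : Prop := inT c.Q2 (c.A i) (c.A (i+1)) x
def onUU (c : Cfg) (i : Fin 4) (x : Pt) : Prop := onT c.Q2 (c.A i) (c.A (i+1)) x

lemma swap_inTT (c : Cfg) : c.swap.inTT = c.inUU := rfl
lemma swap_inUU (c : Cfg) : c.swap.inUU = c.inTT := rfl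
lemma swap_onTT (c : Cfg) : c.swap.onTT = c.onUU := rfl
lemma swap_onUU (c : Cfg) : c.swap.onUU = c.onTT := rfl

/-- parity identity : the Q1-fan indicator sum equals the Q2-fan indicator sum
at any point x off all segments, w.r.t. a generic direction. -/
lemma parity (c : Cfg) {x d : Pt}
    (hxS : ∀ i, x ∉ segment ℝ c.Q1 (c.A i))
    (hxR : ∀ i, x ∉ segment ℝ c.Q2 (c.A i))
    (hxP : ∀ i, x ∉ segment ℝ (c.A i) (c.A (i+1)))
    (hd1 : det2 d (c.Q1 - x) ≠ 0) (hd2 : det2 d (c.Q2 - x) ≠ 0)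
    (hdA : ∀ i, det2 d (c.A i - x) ≠ 0) :
    ((if c.inTT 0 x then 1 else 0) + (if c.inTT 1 x then 1 else 0)
      + (if c.inTT 2 x then 1 else 0) + (if c.inTT 3 x then 1 else 0) : ZMod 2)
    = (if c.inUU 0 x then 1 else 0) + (if c.inUU 1 x then 1 else 0)
      + (if c.inUU 2 x then 1 else 0) + (if c.inUU 3 x then 1 else 0) := by
  have hseg : ∀ i : Fin 4, x ∉ segsT c.Q1 (c.A i) (c.A (i+1)) := by
    intro i h
    rcases h with (h|h)|h
    · exact hxS i h
    · exact hxP i h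
    · exact hxS (i+1) (by rw [segment_symm] at h; exact h)
  have hseg' : ∀ i : Fin 4, x ∉ segsT c.Q2 (c.A i) (c.A (i+1)) := by
    intro i h
    rcases h with (h|h)|h
    · exact hxR i h
    · exact hxP i h
    · exact hxR (i+1) (by rw [segment_symm] at h; exact h)
  have eT : ∀ i : Fin 4, crossInd x d c.Q1 (c.A i) + crossInd x d (c.A i) (c.A (i+1))
      + crossInd x d c.Q1 (c.A (i+1)) = if c.inTT i x then 1 else 0 := by
    intro i
    rw [show crossInd x d c.Q1 (c.A (i+1)) = crossInd x d (c.A (i+1)) c.Q1 from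
      crossInd_symm _ _ _ _]
    exact P1 (c.nT i) hd1 (hdA i) (hdA (i+1)) (hseg i)
  have eU : ∀ i : Fin 4, crossInd x d c.Q2 (c.A i) + crossInd x d (c.A i) (c.A (i+1))
      + crossInd x d c.Q2 (c.A (i+1)) = if c.inUU i x then 1 else 0 := by
    intro i
    rw [show crossInd x d c.Q2 (c.A (i+1)) = crossInd x d (c.A (i+1)) c.Q2 from
      crossInd_symm _ _ _ _]
    exact P1 (c.nU i) hd2 (hdA i) (hdA (i+1)) (hseg' i)
  have key : ∀ s0 s1 s2 s3 r0 r1 r2 r3 p0 p1 p2 p3 : ZMod 2,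
      (s0 + p0 + s1) + (s1 + p1 + s2) + (s2 + p2 + s3) + (s3 + p3 + s0)
      = (r0 + p0 + r1) + (r1 + p1 + r2) + (r2 + p2 + r3) + (r3 + p3 + r0) := by decide
  rw [← eT 0, ← eT 1, ← eT 2, ← eT 3, ← eU 0, ← eU 1, ← eU 2, ← eU 3]
  have h4 : ∀ j : Fin 4, j + 1 = (j + 1 : Fin 4) := fun _ => rfl
  norm_num
  exact key (crossInd x d c.Q1 (c.A 0)) (crossInd x d c.Q1 (c.A 1))
    (crossInd x d c.Q1 (c.A 2)) (crossInd x d c.Q1 (c.A 3))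
    (crossInd x d c.Q2 (c.A 0)) (crossInd x d c.Q2 (c.A 1))
    (crossInd x d c.Q2 (c.A 2)) (crossInd x d c.Q2 (c.A 3))
    (crossInd x d (c.A 0) (c.A 1)) (crossInd x d (c.A 1) (c.A 2))
    (crossInd x d (c.A 2) (c.A 3)) (crossInd x d (c.A 3) (c.A 0))

end Cfg


lemma seg_both {p a b : Pt} (hΔ : tDet p a b ≠ 0) (x y : Pt)
    (h1 : segment ℝ x y ∩ segment ℝ p a = ∅)
    (h2 : segment ℝ x y ∩ segment ℝ a b = ∅)
    (h3 : segment ℝ x y ∩ segment ℝ b p = ∅) :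
    (inT p a b x ∧ inT p a b y) ∨ (¬ onT p a b x ∧ ¬ onT p a b y) := by
  rcases dich_seg hΔ x y h1 h2 h3 with h|h
  · exact Or.inl ⟨h x (left_mem_segment ℝ x y), h y (right_mem_segment ℝ x y)⟩
  · exact Or.inr ⟨h x (left_mem_segment ℝ x y), h y (right_mem_segment ℝ x y)⟩

namespace Cfg

lemma parity' (c : Cfg) {x d : Pt}
    (hxS : ∀ i, x ∉ segment ℝ c.Q1 (c.A i))
    (hxR : ∀ i, x ∉ segment ℝ c.Q2 (c.A i))
    (hxP : ∀ i, x ∉ segment ℝ (c.A i) (c.A (i+1)))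
    (hd1 : det2 d (c.Q1 - x) ≠ 0) (hd2 : det2 d (c.Q2 - x) ≠ 0)
    (hdA : ∀ i, det2 d (c.A i - x) ≠ 0) :
    (∑ i : Fin 4, if c.inTT i x then (1:ZMod 2) else 0)
      = ∑ i : Fin 4, if c.inUU i x then (1:ZMod 2) else 0 := by
  rw [Fin.sum_univ_four, Fin.sum_univ_four]
  exact c.parity hxS hxR hxP hd1 hd2 hdA

lemma caseA (c : Cfg) (i0 : Fin 4) (hQ2 : c.inTT i0 c.Q2) : False := by
  -- Step 1 : everything Q2 can reach is inside T_{i0}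
  have step1 : ∀ m : Fin 4, m ≠ i0 → m ≠ i0 + 1 → c.inTT i0 (c.A m) := by
    intro m hm1 hm2
    have hd := seg_both (c.nT i0) c.Q2 (c.A m)
      (by rw [Set.inter_comm]; exact c.iSRne i0 m (fun h => hm1 h.symm))
      (c.iRP i0 m hm1 hm2)
      (by rw [segment_symm ℝ (x := c.A (i0+1)) (y := c.Q1), Set.inter_comm]; exact c.iSRne (i0+1) m (fun h => hm2 h.symm))
    rcases hd with ⟨_, h⟩|⟨h, _⟩
    · exact h
    · exact absurd (inT.onT hQ2) h
  have hA2 := step1 (i0+2) ((show ∀ i : Fin 4, i + 2 ≠ i by decide) i0)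
    ((show ∀ i : Fin 4, i + 2 ≠ i + 1 by decide) i0)
  have hA3 := step1 (i0+3) ((show ∀ i : Fin 4, i + 3 ≠ i by decide) i0)
    ((show ∀ i : Fin 4, i + 3 ≠ i + 1 by decide) i0)
  have hBT : c.inTT i0 c.B := by
    have hd := seg_both (c.nT i0) c.B c.Q2
      (c.iB2S i0) (c.iB2P i0) (by rw [segment_symm ℝ (x := c.A (i0+1)) (y := c.Q1)]; exact c.iB2S (i0+1))
    rcases hd with ⟨h, _⟩|⟨_, h⟩
    · exact h
    · exact absurd (inT.onT hQ2) h
  have hcvx : ∀ m : Fin 4, c.onTT i0 (c.A m) := by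
    intro m
    by_cases h1 : m = i0
    · subst h1; exact vertex_a_onT _ _ _
    by_cases h2 : m = i0 + 1
    · subst h2; exact vertex_b_onT _ _ _
    · exact inT.onT (step1 m h1 h2)
  -- Q1 is outside every Q2-fan triangle
  have hQ1U : ∀ j, ¬ c.onUU j c.Q1 := by
    intro j hon
    exact extreme_vertex (c.nT i0) (c.nU j) (inT.onT hQ2) (hcvx j) (hcvx (j+1)) hon
      c.dQQ (c.dQ1A j) (c.dQ1A (j+1))
  -- B is outside every Q2-fan triangle
  have hBU : ∀ j, ¬ c.onUU j c.B := by
    intro j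
    have hd := seg_both (c.nU j) c.B c.Q1
      (c.iB1R j) (c.iB1P j) (by rw [segment_symm ℝ (x := c.A (j+1)) (y := c.Q2)]; exact c.iB1R (j+1))
    rcases hd with ⟨_, h⟩|⟨h, _⟩
    · exact absurd (inT.onT h) (hQ1U j)
    · exact h
  -- generic direction at B
  obtain ⟨d, hd⟩ := exists_generic_dir
    [c.Q1 - c.B, c.Q2 - c.B, c.A 0 - c.B, c.A 1 - c.B, c.A 2 - c.B, c.A 3 - c.B]
    (by
      intro w hw
      simp only [List.mem_cons, List.not_mem_nil, or_false] at hw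
      rcases hw with rfl|rfl|rfl|rfl|rfl|rfl
      · exact sub_ne_zero.mpr c.dBQ1.symm
      · exact sub_ne_zero.mpr c.dBQ2.symm
      · exact sub_ne_zero.mpr (c.dBA 0).symm
      · exact sub_ne_zero.mpr (c.dBA 1).symm
      · exact sub_ne_zero.mpr (c.dBA 2).symm
      · exact sub_ne_zero.mpr (c.dBA 3).symm)
  have hdA : ∀ i : Fin 4, det2 d (c.A i - c.B) ≠ 0 := by
    intro i
    fin_cases i
    · exact hd _ (by simp)
    · exact hd _ (by simp)
    · exact hd _ (by simp)
    · exact hd _ (by simp)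
  have hpar := c.parity' c.vBS c.vBR c.vBP (hd _ (by simp)) (hd _ (by simp)) hdA
  have hU0 : (∑ i : Fin 4, if c.inUU i c.B then (1:ZMod 2) else 0) = 0 :=
    Finset.sum_eq_zero (fun i _ => if_neg (fun hin => hBU i (inT.onT hin)))
  rw [hU0] at hpar
  -- find second triangle containing B
  obtain ⟨k, hk, hBk⟩ : ∃ k : Fin 4, k ≠ i0 ∧ c.inTT k c.B := by
    by_contra hno
    push_neg at hno
    have hone : (∑ i : Fin 4, if c.inTT i c.B then (1:ZMod 2) else 0)
        = if c.inTT i0 c.B then 1 else 0 := by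
      apply Finset.sum_eq_single i0
      · intro b _ hb
        exact if_neg (hno b hb)
      · intro h
        exact absurd (Finset.mem_univ i0) h
    rw [hone, if_pos hBT] at hpar
    exact one_ne_zero hpar
  have hQ2k : c.inTT k c.Q2 := by
    have hd := seg_both (c.nT k) c.B c.Q2
      (c.iB2S k) (c.iB2P k) (by rw [segment_symm ℝ (x := c.A (k+1)) (y := c.Q1)]; exact c.iB2S (k+1))
    rcases hd with ⟨_, h⟩|⟨h, _⟩
    · exact h
    · exact absurd (inT.onT hBk) h
  -- pick a vertex of T_{i0} that is not a vertex of T_k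
  have hchoice := (show ∀ a b : Fin 4, b ≠ a → (a ≠ b ∧ a ≠ b + 1) ∨
      (a + 1 ≠ b ∧ a + 1 ≠ b + 1) by decide) i0 k hk
  have final : ∀ js : Fin 4, js ≠ k → js ≠ k + 1 → ¬ c.onTT k (c.A js) → False := by
    intro js hjs1 hjs2 hAnot
    have hd := seg_both (c.nT k) c.Q2 (c.A js)
      (by rw [Set.inter_comm]; exact c.iSRne k js (fun h => hjs1 h.symm))
      (c.iRP k js hjs1 hjs2)
      (by rw [segment_symm ℝ (x := c.A (k+1)) (y := c.Q1), Set.inter_comm]; exact c.iSRne (k+1) js (fun h => hjs2 h.symm))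
    rcases hd with ⟨_, h⟩|⟨h, _⟩
    · exact hAnot (inT.onT h)
    · exact h (inT.onT hQ2k)
  rcases hchoice with ⟨h1, h2⟩|⟨h1, h2⟩
  · refine final i0 h1 h2 ?_
    intro hon
    exact extreme_vertex (p := c.A i0) (a := c.A (i0+1)) (b := c.Q1)
      (by rw [tDet_rot]; exact c.nT i0) (c.nT k)
      (by rw [onT_rot]; exact vertex_p_onT _ _ _)
      (by rw [onT_rot]; exact hcvx k)
      (by rw [onT_rot]; exact hcvx (k+1))
      hon (c.dQ1A i0).symm (c.dAA i0 k h1) (c.dAA i0 (k+1) h2)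
  · refine final (i0+1) h1 h2 ?_
    intro hon
    exact extreme_vertex (p := c.A (i0+1)) (a := c.Q1) (b := c.A i0)
      (by rw [tDet_rot, tDet_rot]; exact c.nT i0) (c.nT k)
      (by rw [onT_rot, onT_rot]; exact vertex_p_onT _ _ _)
      (by rw [onT_rot, onT_rot]; exact hcvx k)
      (by rw [onT_rot, onT_rot]; exact hcvx (k+1))
      hon (c.dQ1A (i0+1)).symm (c.dAA (i0+1) k h1) (c.dAA (i0+1) (k+1) h2)

end Cfg


/-- edge-avoidance helper : a segment whose endpoint v is not interior and whose
other endpoint is not in the closed triangle, with the punctured segment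
avoiding the triangle edges, avoids the interior -/
lemma hseg_edge_fact {p a b : Pt} (hΔ : tDet p a b ≠ 0) {v y : Pt} (hvy : v ≠ y)
    (hvnot : ¬ inT p a b v) (hynot : ¬ onT p a b y)
    (h1 : (segment ℝ v y \ {v}) ∩ segment ℝ p a = ∅)
    (h2 : (segment ℝ v y \ {v}) ∩ segment ℝ a b = ∅)
    (h3 : (segment ℝ v y \ {v}) ∩ segment ℝ b p = ∅) :
    ∀ z ∈ segment ℝ v y, ¬ inT p a b z := by
  intro z hz hzin
  by_cases hzv : z = v
  · exact hvnot (hzv ▸ hzin)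
  rcases dich_hseg hΔ hvy h1 h2 h3 with h|h
  · exact hynot (inT.onT (h y (mem_hseg_self hvy)))
  · exact h z ⟨hz, hzv⟩ (inT.onT hzin)

lemma seg_edge_fact {p a b : Pt} (hΔ : tDet p a b ≠ 0) {x y : Pt}
    (hxnot : ¬ onT p a b x)
    (h1 : segment ℝ x y ∩ segment ℝ p a = ∅)
    (h2 : segment ℝ x y ∩ segment ℝ a b = ∅)
    (h3 : segment ℝ x y ∩ segment ℝ b p = ∅) :
    ∀ z ∈ segment ℝ x y, ¬ inT p a b z := by
  intro z hz hzin
  rcases dich_seg hΔ x y h1 h2 h3 with h|h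
  · exact hxnot (inT.onT (h x (left_mem_segment ℝ x y)))
  · exact h z hz (inT.onT hzin)

lemma inter_comm_empty {s t : Set Pt} (h : s ∩ t = ∅) : t ∩ s = ∅ := by
  rw [Set.inter_comm]; exact h

lemma diff_inter_empty {s t : Set Pt} (r : Set Pt) (h : s ∩ t = ∅) : (s \ r) ∩ t = ∅ := by
  rw [← Set.subset_empty_iff] at h ⊢
  exact subset_trans (Set.inter_subset_inter_left _ Set.diff_subset) h

namespace Cfg

lemma caseB (c : Cfg) (hT : ∀ i, ¬ c.inTT i c.Q2) (hU : ∀ j, ¬ c.inUU j c.Q1) : False := by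
  -- closed-triangle exclusions for the apexes
  have hQ2on : ∀ i, ¬ c.onTT i c.Q2 := by
    intro i hon
    apply hT i
    apply inT_of_onT_not_segs (c.nT i) hon
    rintro ((h|h)|h)
    · exact c.vQ2S i h
    · exact c.vQ2P i h
    · rw [segment_symm ℝ (x := c.A (i+1)) (y := c.Q1)] at h
      exact c.vQ2S (i+1) h
  have hQ1on : ∀ j, ¬ c.onUU j c.Q1 := by
    intro j hon
    apply hU j
    apply inT_of_onT_not_segs (c.nU j) hon
    rintro ((h|h)|h)
    · exact c.vQ1R j h
    · exact c.vQ1P j h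
    · rw [segment_symm ℝ (x := c.A (j+1)) (y := c.Q2)] at h
      exact c.vQ1R (j+1) h
  -- B outside everything
  have hBT : ∀ i, ¬ c.onTT i c.B := by
    intro i
    have hd := seg_both (c.nT i) c.B c.Q2
      (c.iB2S i) (c.iB2P i)
      (by rw [segment_symm ℝ (x := c.A (i+1)) (y := c.Q1)]; exact c.iB2S (i+1))
    rcases hd with ⟨_, h⟩|⟨h, _⟩
    · exact absurd h (hT i)
    · exact h
  have hBU : ∀ j, ¬ c.onUU j c.B := by
    intro j
    have hd := seg_both (c.nU j) c.B c.Q1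
      (c.iB1R j) (c.iB1P j)
      (by rw [segment_symm ℝ (x := c.A (j+1)) (y := c.Q2)]; exact c.iB1R (j+1))
    rcases hd with ⟨_, h⟩|⟨h, _⟩
    · exact absurd h (hU j)
    · exact h
  -- other cycle vertices outside
  have hAT : ∀ i m : Fin 4, m ≠ i → m ≠ i + 1 → ¬ c.onTT i (c.A m) := by
    intro i m hm1 hm2
    have hd := seg_both (c.nT i) c.Q2 (c.A m)
      (by rw [Set.inter_comm]; exact c.iSRne i m (fun h => hm1 h.symm))
      (c.iRP i m hm1 hm2)
      (by rw [segment_symm ℝ (x := c.A (i+1)) (y := c.Q1), Set.inter_comm]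
          exact c.iSRne (i+1) m (fun h => hm2 h.symm))
    rcases hd with ⟨h, _⟩|⟨_, h⟩
    · exact absurd h (hT i)
    · exact h
  have hAU : ∀ j m : Fin 4, m ≠ j → m ≠ j + 1 → ¬ c.onUU j (c.A m) := by
    intro j m hm1 hm2
    have hd := seg_both (c.nU j) c.Q1 (c.A m)
      (c.iSRne m j hm1)
      (c.iSP j m hm1 hm2)
      (by rw [segment_symm ℝ (x := c.A (j+1)) (y := c.Q2)]
          exact c.iSRne m (j+1) hm2)
    rcases hd with ⟨h, _⟩|⟨_, h⟩
    · exact absurd h (hU j)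
    · exact h
  -- shorthand
  have d01 : (0:Fin 4) ≠ 1 := by decide
  have d02 : (0:Fin 4) ≠ 2 := by decide
  have d03 : (0:Fin 4) ≠ 3 := by decide
  have d10 : (1:Fin 4) ≠ 0 := by decide
  have d12 : (1:Fin 4) ≠ 2 := by decide
  have d13 : (1:Fin 4) ≠ 3 := by decide
  have d20 : (2:Fin 4) ≠ 0 := by decide
  have d21 : (2:Fin 4) ≠ 1 := by decide
  have d23 : (2:Fin 4) ≠ 3 := by decide
  have d30 : (3:Fin 4) ≠ 0 := by decide
  have d31 : (3:Fin 4) ≠ 1 := by decide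
  have d32 : (3:Fin 4) ≠ 2 := by decide
  -- edges of T_0 avoid the interior of T_1
  have eS0T1 : ∀ z ∈ segment ℝ c.Q1 (c.A 0), ¬ inT c.Q1 (c.A 1) (c.A 2) z := by
    refine hseg_edge_fact (p := c.Q1) (a := c.A 1) (b := c.A 2) (c.nT 1) (c.dQ1A 0) (vertex_p_not_inT _ _ _) (hAT 1 0 d01 d02)
      (subset_diff_inter_empty (c.iSS 0 1 d01))
      (diff_inter_empty _ (c.iSP 1 0 d01 d02))
      ?_
    rw [segment_symm ℝ (x := c.A 2) (y := c.Q1)]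
    exact subset_diff_inter_empty (c.iSS 0 2 d02)
  have eS1T1 : ∀ z ∈ segment ℝ c.Q1 (c.A 1), ¬ inT c.Q1 (c.A 1) (c.A 2) z :=
    fun z hz => seg_pa_not_inT c.Q1 (c.A 1) (c.A 2) hz
  have eP0T1 : ∀ z ∈ segment ℝ (c.A 0) (c.A 1), ¬ inT c.Q1 (c.A 1) (c.A 2) z := by
    have main := hseg_edge_fact (p := c.Q1) (a := c.A 1) (b := c.A 2) (c.nT 1)
      (c.dAA 1 0 d10) (vertex_a_not_inT _ _ _) (hAT 1 0 d01 d02)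
      (by
        apply subset_diff_inter_empty
        rw [segment_symm ℝ (x := c.A 1) (y := c.A 0), Set.inter_comm]
        exact c.iSPr 0)
      (by
        apply subset_diff_inter_empty
        rw [segment_symm ℝ (x := c.A 1) (y := c.A 0)]
        exact c.iPPadj 0)
      (by
        apply diff_inter_empty
        rw [segment_symm ℝ (x := c.A 1) (y := c.A 0),
          segment_symm ℝ (x := c.A 2) (y := c.Q1), Set.inter_comm]
        exact c.iSP 0 2 d20 d21)
    intro z hz
    exact main z (by rw [segment_symm ℝ (x := c.A 1) (y := c.A 0)]; exact hz)
  -- edges of T_0 avoid the interior of T_2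
  have eS0T2 : ∀ z ∈ segment ℝ c.Q1 (c.A 0), ¬ inT c.Q1 (c.A 2) (c.A 3) z := by
    refine hseg_edge_fact (p := c.Q1) (a := c.A 2) (b := c.A 3) (c.nT 2) (c.dQ1A 0) (vertex_p_not_inT _ _ _) (hAT 2 0 d02 d03)
      (subset_diff_inter_empty (c.iSS 0 2 d02))
      (diff_inter_empty _ (c.iSP 2 0 d02 d03))
      ?_
    rw [segment_symm ℝ (x := c.A 3) (y := c.Q1)]
    exact subset_diff_inter_empty (c.iSS 0 3 d03)
  have eS1T2 : ∀ z ∈ segment ℝ c.Q1 (c.A 1), ¬ inT c.Q1 (c.A 2) (c.A 3) z := by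
    refine hseg_edge_fact (p := c.Q1) (a := c.A 2) (b := c.A 3) (c.nT 2) (c.dQ1A 1) (vertex_p_not_inT _ _ _) (hAT 2 1 d12 d13)
      (subset_diff_inter_empty (c.iSS 1 2 d12))
      (diff_inter_empty _ (c.iSP 2 1 d12 d13))
      ?_
    rw [segment_symm ℝ (x := c.A 3) (y := c.Q1)]
    exact subset_diff_inter_empty (c.iSS 1 3 d13)
  have eP0T2 : ∀ z ∈ segment ℝ (c.A 0) (c.A 1), ¬ inT c.Q1 (c.A 2) (c.A 3) z := by
    refine seg_edge_fact (p := c.Q1) (a := c.A 2) (b := c.A 3) (c.nT 2) (hAT 2 0 d02 d03)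
      (inter_comm_empty (c.iSP 0 2 d20 d21))
      (inter_comm_empty (c.iPP 2 0 d02 d03 d21))
      ?_
    rw [segment_symm ℝ (x := c.A 3) (y := c.Q1)]
    exact inter_comm_empty (c.iSP 0 3 d30 d31)
  -- edges of T_0 avoid the interior of T_3
  have eS0T3 : ∀ z ∈ segment ℝ c.Q1 (c.A 0), ¬ inT c.Q1 (c.A 3) (c.A 0) z := by
    intro z hz
    exact seg_bp_not_inT c.Q1 (c.A 3) (c.A 0)
      (by rw [segment_symm ℝ (x := c.A 0) (y := c.Q1)]; exact hz)
  have eS1T3 : ∀ z ∈ segment ℝ c.Q1 (c.A 1), ¬ inT c.Q1 (c.A 3) (c.A 0) z := by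
    refine hseg_edge_fact (p := c.Q1) (a := c.A 3) (b := c.A 0) (c.nT 3) (c.dQ1A 1) (vertex_p_not_inT _ _ _) (hAT 3 1 d13 d10)
      (subset_diff_inter_empty (c.iSS 1 3 d13))
      (diff_inter_empty _ (c.iSP 3 1 d13 d10))
      ?_
    rw [segment_symm ℝ (x := c.A 0) (y := c.Q1)]
    exact subset_diff_inter_empty (c.iSS 1 0 d10)
  have eP0T3 : ∀ z ∈ segment ℝ (c.A 0) (c.A 1), ¬ inT c.Q1 (c.A 3) (c.A 0) z := by
    refine hseg_edge_fact (p := c.Q1) (a := c.A 3) (b := c.A 0) (c.nT 3)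
      (c.dAA 0 1 d01) (vertex_b_not_inT _ _ _) (hAT 3 1 d13 d10)
      (by
        apply diff_inter_empty
        exact inter_comm_empty (c.iSP 0 3 d30 d31))
      (by
        apply subset_diff_inter_empty
        rw [Set.inter_comm]
        exact c.iPPadj 3)
      (by
        apply subset_diff_inter_empty
        rw [segment_symm ℝ (x := c.A 0) (y := c.Q1), Set.inter_comm]
        exact c.iSPl 0)
  -- edges of T_0 avoid the interiors of the U triangles
  have eS0U0 : ∀ z ∈ segment ℝ c.Q1 (c.A 0), ¬ inT c.Q2 (c.A 0) (c.A 1) z := by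
    have main := hseg_edge_fact (p := c.Q2) (a := c.A 0) (b := c.A 1) (c.nU 0)
      (Ne.symm (c.dQ1A 0)) (vertex_a_not_inT _ _ _) (hQ1on 0)
      (by
        apply subset_diff_inter_empty
        rw [segment_symm ℝ (x := c.A 0) (y := c.Q1)]
        exact c.iSReq 0)
      (by
        apply subset_diff_inter_empty
        rw [segment_symm ℝ (x := c.A 0) (y := c.Q1)]
        exact c.iSPl 0)
      (by
        apply diff_inter_empty
        rw [segment_symm ℝ (x := c.A 0) (y := c.Q1),
          segment_symm ℝ (x := c.A 1) (y := c.Q2)]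
        exact c.iSRne 0 1 d01)
    intro z hz
    exact main z (by rw [segment_symm ℝ (x := c.A 0) (y := c.Q1)]; exact hz)
  have eS1U0 : ∀ z ∈ segment ℝ c.Q1 (c.A 1), ¬ inT c.Q2 (c.A 0) (c.A 1) z := by
    have main := hseg_edge_fact (p := c.Q2) (a := c.A 0) (b := c.A 1) (c.nU 0)
      (Ne.symm (c.dQ1A 1)) (vertex_b_not_inT _ _ _) (hQ1on 0)
      (by
        apply diff_inter_empty
        rw [segment_symm ℝ (x := c.A 1) (y := c.Q1)]
        exact c.iSRne 1 0 d10)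
      (by
        apply subset_diff_inter_empty
        rw [segment_symm ℝ (x := c.A 1) (y := c.Q1)]
        exact c.iSPr 0)
      (by
        apply subset_diff_inter_empty
        rw [segment_symm ℝ (x := c.A 1) (y := c.Q1),
          segment_symm ℝ (x := c.A 1) (y := c.Q2)]
        exact c.iSReq 1)
    intro z hz
    exact main z (by rw [segment_symm ℝ (x := c.A 1) (y := c.Q1)]; exact hz)
  have eP0U0 : ∀ z ∈ segment ℝ (c.A 0) (c.A 1), ¬ inT c.Q2 (c.A 0) (c.A 1) z :=
    fun z hz => seg_ab_not_inT c.Q2 (c.A 0) (c.A 1) hz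
  have eS0U1 : ∀ z ∈ segment ℝ c.Q1 (c.A 0), ¬ inT c.Q2 (c.A 1) (c.A 2) z := by
    refine seg_edge_fact (p := c.Q2) (a := c.A 1) (b := c.A 2) (c.nU 1) (hQ1on 1)
      (c.iSRne 0 1 d01)
      (c.iSP 1 0 d01 d02)
      ?_
    rw [segment_symm ℝ (x := c.A 2) (y := c.Q2)]
    exact c.iSRne 0 2 d02
  have eS1U1 : ∀ z ∈ segment ℝ c.Q1 (c.A 1), ¬ inT c.Q2 (c.A 1) (c.A 2) z := by
    have main := hseg_edge_fact (p := c.Q2) (a := c.A 1) (b := c.A 2) (c.nU 1)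
      (Ne.symm (c.dQ1A 1)) (vertex_a_not_inT _ _ _) (hQ1on 1)
      (by
        apply subset_diff_inter_empty
        rw [segment_symm ℝ (x := c.A 1) (y := c.Q1)]
        exact c.iSReq 1)
      (by
        apply subset_diff_inter_empty
        rw [segment_symm ℝ (x := c.A 1) (y := c.Q1)]
        exact c.iSPl 1)
      (by
        apply diff_inter_empty
        rw [segment_symm ℝ (x := c.A 1) (y := c.Q1),
          segment_symm ℝ (x := c.A 2) (y := c.Q2)]
        exact c.iSRne 1 2 d12)
    intro z hz
    exact main z (by rw [segment_symm ℝ (x := c.A 1) (y := c.Q1)]; exact hz)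
  have eP0U1 : ∀ z ∈ segment ℝ (c.A 0) (c.A 1), ¬ inT c.Q2 (c.A 1) (c.A 2) z := by
    have main := hseg_edge_fact (p := c.Q2) (a := c.A 1) (b := c.A 2) (c.nU 1)
      (c.dAA 1 0 d10) (vertex_a_not_inT _ _ _) (hAU 1 0 d01 d02)
      (by
        apply subset_diff_inter_empty
        rw [segment_symm ℝ (x := c.A 1) (y := c.A 0), Set.inter_comm]
        exact c.iRPr 0)
      (by
        apply subset_diff_inter_empty
        rw [segment_symm ℝ (x := c.A 1) (y := c.A 0)]
        exact c.iPPadj 0)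
      (by
        apply diff_inter_empty
        rw [segment_symm ℝ (x := c.A 1) (y := c.A 0),
          segment_symm ℝ (x := c.A 2) (y := c.Q2), Set.inter_comm]
        exact c.iRP 0 2 d20 d21)
    intro z hz
    exact main z (by rw [segment_symm ℝ (x := c.A 1) (y := c.A 0)]; exact hz)
  have eS0U2 : ∀ z ∈ segment ℝ c.Q1 (c.A 0), ¬ inT c.Q2 (c.A 2) (c.A 3) z := by
    refine seg_edge_fact (p := c.Q2) (a := c.A 2) (b := c.A 3) (c.nU 2) (hQ1on 2)
      (c.iSRne 0 2 d02)
      (c.iSP 2 0 d02 d03)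
      ?_
    rw [segment_symm ℝ (x := c.A 3) (y := c.Q2)]
    exact c.iSRne 0 3 d03
  have eS1U2 : ∀ z ∈ segment ℝ c.Q1 (c.A 1), ¬ inT c.Q2 (c.A 2) (c.A 3) z := by
    refine seg_edge_fact (p := c.Q2) (a := c.A 2) (b := c.A 3) (c.nU 2) (hQ1on 2)
      (c.iSRne 1 2 d12)
      (c.iSP 2 1 d12 d13)
      ?_
    rw [segment_symm ℝ (x := c.A 3) (y := c.Q2)]
    exact c.iSRne 1 3 d13
  have eP0U2 : ∀ z ∈ segment ℝ (c.A 0) (c.A 1), ¬ inT c.Q2 (c.A 2) (c.A 3) z := by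
    refine seg_edge_fact (p := c.Q2) (a := c.A 2) (b := c.A 3) (c.nU 2) (hAU 2 0 d02 d03)
      (inter_comm_empty (c.iRP 0 2 d20 d21))
      (inter_comm_empty (c.iPP 2 0 d02 d03 d21))
      ?_
    rw [segment_symm ℝ (x := c.A 3) (y := c.Q2)]
    exact inter_comm_empty (c.iRP 0 3 d30 d31)
  have eS0U3 : ∀ z ∈ segment ℝ c.Q1 (c.A 0), ¬ inT c.Q2 (c.A 3) (c.A 0) z := by
    have main := hseg_edge_fact (p := c.Q2) (a := c.A 3) (b := c.A 0) (c.nU 3)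
      (Ne.symm (c.dQ1A 0)) (vertex_b_not_inT _ _ _) (hQ1on 3)
      (by
        apply diff_inter_empty
        rw [segment_symm ℝ (x := c.A 0) (y := c.Q1)]
        exact c.iSRne 0 3 d03)
      (by
        apply subset_diff_inter_empty
        rw [segment_symm ℝ (x := c.A 0) (y := c.Q1)]
        exact c.iSPr 3)
      (by
        apply subset_diff_inter_empty
        rw [segment_symm ℝ (x := c.A 0) (y := c.Q1),
          segment_symm ℝ (x := c.A 0) (y := c.Q2)]
        exact c.iSReq 0)
    intro z hz
    exact main z (by rw [segment_symm ℝ (x := c.A 0) (y := c.Q1)]; exact hz)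
  have eS1U3 : ∀ z ∈ segment ℝ c.Q1 (c.A 1), ¬ inT c.Q2 (c.A 3) (c.A 0) z := by
    refine seg_edge_fact (p := c.Q2) (a := c.A 3) (b := c.A 0) (c.nU 3) (hQ1on 3)
      (c.iSRne 1 3 d13)
      (c.iSP 3 1 d13 d10)
      ?_
    rw [segment_symm ℝ (x := c.A 0) (y := c.Q2)]
    exact c.iSRne 1 0 d10
  have eP0U3 : ∀ z ∈ segment ℝ (c.A 0) (c.A 1), ¬ inT c.Q2 (c.A 3) (c.A 0) z := by
    refine hseg_edge_fact (p := c.Q2) (a := c.A 3) (b := c.A 0) (c.nU 3)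
      (c.dAA 0 1 d01) (vertex_b_not_inT _ _ _) (hAU 3 1 d13 d10)
      (by
        apply diff_inter_empty
        exact inter_comm_empty (c.iRP 0 3 d30 d31))
      (by
        apply subset_diff_inter_empty
        rw [Set.inter_comm]
        exact c.iPPadj 3)
      (by
        apply subset_diff_inter_empty
        rw [segment_symm ℝ (x := c.A 0) (y := c.Q2), Set.inter_comm]
        exact c.iRPl 0)
  -- interior disjointness with T_0
  have hno1 : ∀ z, inT c.Q1 (c.A 1) (c.A 2) z → ¬ inT c.Q1 (c.A 0) (c.A 1) z := by
    have hd := disjoint_int (p := c.Q1) (a := c.A 0) (b := c.A 1) (q := c.A 2) (r := c.Q1) (w := c.A 1) (c.nT 0)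
      (by rw [tDet_rot, tDet_rot]; exact c.nT 1) (hAT 0 2 d20 d21)
      (fun z hz hin => eS0T1 z hz
        ((inT_rot c.Q1 (c.A 1) (c.A 2) z).mp ((inT_rot (c.A 1) (c.A 2) c.Q1 z).mp hin)))
      (fun z hz hin => eP0T1 z hz
        ((inT_rot c.Q1 (c.A 1) (c.A 2) z).mp ((inT_rot (c.A 1) (c.A 2) c.Q1 z).mp hin)))
      (fun z hz hin => eS1T1 z
        (by rwa [segment_symm ℝ (x := c.A 1) (y := c.Q1)] at hz)
        ((inT_rot c.Q1 (c.A 1) (c.A 2) z).mp ((inT_rot (c.A 1) (c.A 2) c.Q1 z).mp hin)))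
    intro z h
    exact hd z ((inT_rot (c.A 1) (c.A 2) c.Q1 z).mpr ((inT_rot c.Q1 (c.A 1) (c.A 2) z).mpr h))
  have hno2 : ∀ z, inT c.Q1 (c.A 2) (c.A 3) z → ¬ inT c.Q1 (c.A 0) (c.A 1) z := by
    have hd := disjoint_int (p := c.Q1) (a := c.A 0) (b := c.A 1) (q := c.A 2) (r := c.A 3) (w := c.Q1) (c.nT 0)
      (by rw [tDet_rot]; exact c.nT 2) (hAT 0 2 d20 d21)
      (fun z hz hin => eS0T2 z hz ((inT_rot c.Q1 (c.A 2) (c.A 3) z).mp hin))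
      (fun z hz hin => eP0T2 z hz ((inT_rot c.Q1 (c.A 2) (c.A 3) z).mp hin))
      (fun z hz hin => eS1T2 z
        (by rwa [segment_symm ℝ (x := c.A 1) (y := c.Q1)] at hz)
        ((inT_rot c.Q1 (c.A 2) (c.A 3) z).mp hin))
    intro z h
    exact hd z ((inT_rot c.Q1 (c.A 2) (c.A 3) z).mpr h)
  have hno3 : ∀ z, inT c.Q1 (c.A 3) (c.A 0) z → ¬ inT c.Q1 (c.A 0) (c.A 1) z := by
    have hd := disjoint_int (p := c.Q1) (a := c.A 0) (b := c.A 1) (q := c.A 3) (r := c.A 0) (w := c.Q1) (c.nT 0)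
      (by rw [tDet_rot]; exact c.nT 3) (hAT 0 3 d30 d31)
      (fun z hz hin => eS0T3 z hz ((inT_rot c.Q1 (c.A 3) (c.A 0) z).mp hin))
      (fun z hz hin => eP0T3 z hz ((inT_rot c.Q1 (c.A 3) (c.A 0) z).mp hin))
      (fun z hz hin => eS1T3 z
        (by rwa [segment_symm ℝ (x := c.A 1) (y := c.Q1)] at hz)
        ((inT_rot c.Q1 (c.A 3) (c.A 0) z).mp hin))
    intro z h
    exact hd z ((inT_rot c.Q1 (c.A 3) (c.A 0) z).mpr h)
  have hnoU0 : ∀ z, inT c.Q2 (c.A 0) (c.A 1) z → ¬ inT c.Q1 (c.A 0) (c.A 1) z :=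
    disjoint_int (p := c.Q1) (a := c.A 0) (b := c.A 1) (c.nT 0) (c.nU 0) (hQ2on 0) eS0U0 eP0U0
      (fun z hz => eS1U0 z (by rwa [segment_symm ℝ (x := c.A 1) (y := c.Q1)] at hz))
  have hnoU1 : ∀ z, inT c.Q2 (c.A 1) (c.A 2) z → ¬ inT c.Q1 (c.A 0) (c.A 1) z :=
    disjoint_int (p := c.Q1) (a := c.A 0) (b := c.A 1) (c.nT 0) (c.nU 1) (hQ2on 0) eS0U1 eP0U1
      (fun z hz => eS1U1 z (by rwa [segment_symm ℝ (x := c.A 1) (y := c.Q1)] at hz))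
  have hnoU2 : ∀ z, inT c.Q2 (c.A 2) (c.A 3) z → ¬ inT c.Q1 (c.A 0) (c.A 1) z :=
    disjoint_int (p := c.Q1) (a := c.A 0) (b := c.A 1) (c.nT 0) (c.nU 2) (hQ2on 0) eS0U2 eP0U2
      (fun z hz => eS1U2 z (by rwa [segment_symm ℝ (x := c.A 1) (y := c.Q1)] at hz))
  have hnoU3 : ∀ z, inT c.Q2 (c.A 3) (c.A 0) z → ¬ inT c.Q1 (c.A 0) (c.A 1) z :=
    disjoint_int (p := c.Q1) (a := c.A 0) (b := c.A 1) (c.nT 0) (c.nU 3) (hQ2on 0) eS0U3 eP0U3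
      (fun z hz => eS1U3 z (by rwa [segment_symm ℝ (x := c.A 1) (y := c.Q1)] at hz))
  -- pick a generic interior point of T_0
  obtain ⟨x, hx0, hxseg⟩ := exists_generic_point (p := c.Q1) (a := c.A 0) (b := c.A 1) (c.nT 0)
    [(c.Q1, c.A 0), (c.Q1, c.A 1), (c.Q1, c.A 2), (c.Q1, c.A 3),
     (c.Q2, c.A 0), (c.Q2, c.A 1), (c.Q2, c.A 2), (c.Q2, c.A 3),
     (c.A 0, c.A 1), (c.A 1, c.A 2), (c.A 2, c.A 3), (c.A 3, c.A 0)]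
    (by
      intro e he
      simp only [List.mem_cons, List.not_mem_nil, or_false] at he
      rcases he with rfl|rfl|rfl|rfl|rfl|rfl|rfl|rfl|rfl|rfl|rfl|rfl
      · exact c.dQ1A 0
      · exact c.dQ1A 1
      · exact c.dQ1A 2
      · exact c.dQ1A 3
      · exact c.dQ2A 0
      · exact c.dQ2A 1
      · exact c.dQ2A 2
      · exact c.dQ2A 3
      · exact c.dAA 0 1 d01
      · exact c.dAA 1 2 d12
      · exact c.dAA 2 3 d23
      · exact c.dAA 3 0 d30)
  have hxS : ∀ i : Fin 4, x ∉ segment ℝ c.Q1 (c.A i) := by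
    intro i
    fin_cases i
    · exact hxseg (c.Q1, c.A 0) (by simp)
    · exact hxseg (c.Q1, c.A 1) (by simp)
    · exact hxseg (c.Q1, c.A 2) (by simp)
    · exact hxseg (c.Q1, c.A 3) (by simp)
  have hxR : ∀ i : Fin 4, x ∉ segment ℝ c.Q2 (c.A i) := by
    intro i
    fin_cases i
    · exact hxseg (c.Q2, c.A 0) (by simp)
    · exact hxseg (c.Q2, c.A 1) (by simp)
    · exact hxseg (c.Q2, c.A 2) (by simp)
    · exact hxseg (c.Q2, c.A 3) (by simp)
  have hxP : ∀ i : Fin 4, x ∉ segment ℝ (c.A i) (c.A (i+1)) := by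
    intro i
    fin_cases i
    · exact hxseg (c.A 0, c.A 1) (by simp)
    · exact hxseg (c.A 1, c.A 2) (by simp)
    · exact hxseg (c.A 2, c.A 3) (by simp)
    · exact hxseg (c.A 3, c.A 0) (by simp)
  have hxQ1 : x ≠ c.Q1 := fun h => hxS 0 (h ▸ left_mem_segment ℝ c.Q1 (c.A 0))
  have hxQ2 : x ≠ c.Q2 := fun h => hxR 0 (h ▸ left_mem_segment ℝ c.Q2 (c.A 0))
  have hxA : ∀ i : Fin 4, x ≠ c.A i :=
    fun i h => hxS i (h ▸ right_mem_segment ℝ c.Q1 (c.A i))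
  obtain ⟨d, hd⟩ := exists_generic_dir
    [c.Q1 - x, c.Q2 - x, c.A 0 - x, c.A 1 - x, c.A 2 - x, c.A 3 - x]
    (by
      intro w hw
      simp only [List.mem_cons, List.not_mem_nil, or_false] at hw
      rcases hw with rfl|rfl|rfl|rfl|rfl|rfl
      · exact sub_ne_zero.mpr (fun h => hxQ1 h.symm)
      · exact sub_ne_zero.mpr (fun h => hxQ2 h.symm)
      · exact sub_ne_zero.mpr (fun h => hxA 0 h.symm)
      · exact sub_ne_zero.mpr (fun h => hxA 1 h.symm)
      · exact sub_ne_zero.mpr (fun h => hxA 2 h.symm)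
      · exact sub_ne_zero.mpr (fun h => hxA 3 h.symm))
  have hdA : ∀ i : Fin 4, det2 d (c.A i - x) ≠ 0 := by
    intro i
    fin_cases i
    · exact hd _ (by simp)
    · exact hd _ (by simp)
    · exact hd _ (by simp)
    · exact hd _ (by simp)
  have hpar := c.parity' hxS hxR hxP (hd _ (by simp)) (hd _ (by simp)) hdA
  have hRHS : (∑ i : Fin 4, if c.inUU i x then (1:ZMod 2) else 0) = 0 := by
    apply Finset.sum_eq_zero
    intro j _
    apply if_neg
    intro hin
    fin_cases j
    · exact hnoU0 x hin hx0
    · exact hnoU1 x hin hx0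
    · exact hnoU2 x hin hx0
    · exact hnoU3 x hin hx0
  have hLHS : (∑ i : Fin 4, if c.inTT i x then (1:ZMod 2) else 0) = 1 := by
    rw [Fin.sum_univ_four]
    rw [if_pos (show c.inTT 0 x from hx0),
      if_neg (show ¬ c.inTT 1 x from fun h => hno1 x h hx0),
      if_neg (show ¬ c.inTT 2 x from fun h => hno2 x h hx0),
      if_neg (show ¬ c.inTT 3 x from fun h => hno3 x h hx0)]
    decide
  rw [hRHS, hLHS] at hpar
  exact one_ne_zero hpar

end Cfg


theorem Cfg.false' (c : Cfg) : False := by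
  by_cases h1 : ∃ i, c.inTT i c.Q2
  · obtain ⟨i, hi⟩ := h1
    exact c.caseA i hi
  by_cases h2 : ∃ j, c.inUU j c.Q1
  · obtain ⟨j, hj⟩ := h2
    exact c.swap.caseA j hj
  push_neg at h1 h2
  exact c.caseB (fun i => h1 i) (fun j => h2 j)

/-- three distinct collinear points : one lies strictly between the others -/
lemma collinear_between {u v w : Pt} (huw : u ≠ w) (hvw : v ≠ w) (hvu : v ≠ u)
    (h : tDet u v w = 0) :
    u ∈ openSegment ℝ v w ∨ v ∈ openSegment ℝ u w ∨ w ∈ openSegment ℝ u v := by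
  have hvu' : v - u ≠ 0 := sub_ne_zero.mpr hvu
  obtain ⟨cc, hc⟩ := exists_smul_of_det_zero hvu' (by
    have : tDet u v w = det2 (v - u) (w - u) := rfl
    rw [← this]; exact h)
  -- w - u = cc • (v - u)
  have hc0 : cc ≠ 0 := by
    intro h0
    rw [h0, zero_smul, sub_eq_zero] at hc
    exact huw hc.symm
  have hc1 : cc ≠ 1 := by
    intro h1
    rw [h1, one_smul] at hc
    apply hvw
    have : w - u = v - u := hc
    have h2 : w = v := by
      have := congrArg (fun z => z + u) this
      simpa using this
    exact h2.symm
  have hw : w = u + cc • (v - u) := by rw [← hc]; abel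
  rcases lt_trichotomy cc 0 with hlt|heq|hgt
  · -- u between v and w : u = (-cc/(1-cc)) v + (1/(1-cc)) w
    left
    have h1c : (0:ℝ) < 1 - cc := by linarith
    refine ⟨-cc / (1 - cc), 1 / (1 - cc), div_pos (by linarith) h1c, by positivity,
      by field_simp; ring, ?_⟩
    rw [hw]
    apply Prod.ext
    · simp only [Prod.smul_fst, Prod.fst_add, Prod.fst_sub, smul_eq_mul]
      field_simp
      ring
    · simp only [Prod.smul_snd, Prod.snd_add, Prod.snd_sub, smul_eq_mul]
      field_simp
      ring
  · exact absurd heq hc0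
  · rcases lt_trichotomy cc 1 with hlt1|heq1|hgt1
    · -- w between u and v
      right; right
      refine ⟨1 - cc, cc, by linarith, hgt, by ring, ?_⟩
      rw [hw]
      apply Prod.ext
      · simp only [Prod.smul_fst, Prod.fst_add, Prod.fst_sub, smul_eq_mul]
        ring
      · simp only [Prod.smul_snd, Prod.snd_add, Prod.snd_sub, smul_eq_mul]
        ring
    · exact absurd heq1 hc1
    · -- v between u and w : v = (1 - 1/cc) u + (1/cc) w
      right; left
      refine ⟨1 - 1/cc, 1/cc, by
        have : 1/cc < 1 := by rw [div_lt_one (by linarith)]; linarith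
        linarith, by positivity, by ring, ?_⟩
      rw [hw]
      apply Prod.ext
      · simp only [Prod.smul_fst, Prod.fst_add, Prod.fst_sub, smul_eq_mul]
        field_simp
        ring
      · simp only [Prod.smul_snd, Prod.snd_add, Prod.snd_sub, smul_eq_mul]
        field_simp
        ring

end NTA

open NTA in
/-- In every planar geometric storyplan of `G`, there is no time
step at which all twelve cycle vertices and two distinct apex vertices are
simultaneously visible. -/
theorem no_two_apexes_with_all_cycles
    (len : ℕ) (s e : GVert → ℕ) (D : GVert → ℝ × ℝ)
    (hSP : IsGeomStoryplan GraphG len s e D) :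
    ¬ ∃ (t : ℕ) (p₁ p₂ : Fin 4 × Fin 2), p₁ ≠ p₂ ∧
        CyclesVisible s e t ∧
        Visible s e t (.q p₁.1 p₁.2) ∧ Visible s e t (.q p₂.1 p₂.2) := by
  rintro ⟨t, p₁, p₂, hp, hcyc, hv1, hv2⟩
  obtain ⟨hlen, hbounds, hedge, hframe⟩ := hSP
  have ht1 : 1 ≤ t := le_trans (hbounds (.a 0)).1 (hcyc 0).1.1
  have ht2 : t ≤ len := le_trans (hcyc 0).1.2 (hbounds (.a 0)).2.2
  obtain ⟨hinj, hvert, hcross⟩ := hframe t ht1 ht2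
  have hSa : ∀ i : Fin 4, (GVert.a i) ∈ {v | s v ≤ t ∧ t ≤ e v} := fun i => (hcyc i).1
  have hSb : (GVert.b 0) ∈ {v | s v ≤ t ∧ t ≤ e v} := (hcyc 0).2.1
  have hSq1 : (GVert.q p₁.1 p₁.2) ∈ {v | s v ≤ t ∧ t ≤ e v} := hv1
  have hSq2 : (GVert.q p₂.1 p₂.2) ∈ {v | s v ≤ t ∧ t ≤ e v} := hv2
  have hq12 : (GVert.q p₁.1 p₁.2) ≠ (GVert.q p₂.1 p₂.2) := by
    intro h
    injection h with h1 h2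
    exact hp (Prod.ext h1 h2)
  have hfinaa : ∀ i : Fin 4, i ≠ i + 1 := by decide
  -- adjacency facts
  have adjAA : ∀ i : Fin 4, GraphG.Adj (.a i) (.a (i+1)) := by
    intro i
    rw [GraphG, SimpleGraph.fromRel_adj]
    refine ⟨fun h => ?_, Or.inl ?_⟩
    · injection h with h'
      exact hfinaa i h'
    · show GRel (.a i) (.a (i+1))
      exact rfl
  have adjQA : ∀ (a4 : Fin 4) (b2 : Fin 2) (i : Fin 4), GraphG.Adj (.q a4 b2) (.a i) := by
    intro a4 b2 i
    rw [GraphG, SimpleGraph.fromRel_adj]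
    exact ⟨fun h => GVert.noConfusion h, Or.inl trivial⟩
  have adjQB : ∀ (a4 : Fin 4) (b2 : Fin 2), GraphG.Adj (.q a4 b2) (.b 0) := by
    intro a4 b2
    rw [GraphG, SimpleGraph.fromRel_adj]
    exact ⟨fun h => GVert.noConfusion h, Or.inl trivial⟩
  -- basic helpers
  have hne : ∀ {u v : GVert}, u ∈ {v | s v ≤ t ∧ t ≤ e v} → v ∈ {v | s v ≤ t ∧ t ≤ e v} →
      u ≠ v → D u ≠ D v := fun hu hv huv h => huv (hinj hu hv h)
  have hvseg : ∀ u v w : GVert, GraphG.Adj u v → u ∈ {v | s v ≤ t ∧ t ≤ e v} →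
      v ∈ {v | s v ≤ t ∧ t ≤ e v} → w ∈ {v | s v ≤ t ∧ t ≤ e v} → w ≠ u → w ≠ v →
      D w ∉ segment ℝ (D u) (D v) := by
    intro u v w hadj hu hv hw hwu hwv hmem
    rw [← insert_endpoints_openSegment] at hmem
    simp only [Set.mem_insert_iff] at hmem
    rcases hmem with h|h|h
    · exact hwu (hinj hw hu h)
    · exact hwv (hinj hw hv h)
    · exact hvert u v w hadj hu hv hw hwu hwv h
  have hSub : ∀ (u v x y w : GVert), GraphG.Adj u v → GraphG.Adj x y →
      u ∈ {v | s v ≤ t ∧ t ≤ e v} → v ∈ {v | s v ≤ t ∧ t ≤ e v} →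
      x ∈ {v | s v ≤ t ∧ t ≤ e v} → y ∈ {v | s v ≤ t ∧ t ≤ e v} →
      ¬((u = x ∧ v = y) ∨ (u = y ∧ v = x)) →
      (∀ z : GVert, (z = u ∨ z = v) → (z = x ∨ z = y) → z = w) →
      segment ℝ (D u) (D v) ∩ segment ℝ (D x) (D y) ⊆ {D w} := by
    intro u v x y w h1 h2 hu hv hx hy hnedge hcls p hp
    obtain ⟨z, hz1, hz2, hpz⟩ := hcross u v x y h1 h2 hu hv hx hy hnedge p hp
    rw [Set.mem_singleton_iff, hpz, hcls z hz1 hz2]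
  have hEmp : ∀ (u v x y : GVert), GraphG.Adj u v → GraphG.Adj x y →
      u ∈ {v | s v ≤ t ∧ t ≤ e v} → v ∈ {v | s v ≤ t ∧ t ≤ e v} →
      x ∈ {v | s v ≤ t ∧ t ≤ e v} → y ∈ {v | s v ≤ t ∧ t ≤ e v} →
      ¬((u = x ∧ v = y) ∨ (u = y ∧ v = x)) →
      (∀ z : GVert, (z = u ∨ z = v) → (z = x ∨ z = y) → False) →
      segment ℝ (D u) (D v) ∩ segment ℝ (D x) (D y) = ∅ := by
    intro u v x y h1 h2 hu hv hx hy hnedge hcls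
    rw [Set.eq_empty_iff_forall_notMem]
    intro p hp
    obtain ⟨z, hz1, hz2, _⟩ := hcross u v x y h1 h2 hu hv hx hy hnedge p hp
    exact hcls z hz1 hz2
  -- nondegeneracy
  have hnondeg : ∀ (a4 : Fin 4) (b2 : Fin 2),
      (GVert.q a4 b2) ∈ {v | s v ≤ t ∧ t ≤ e v} →
      ∀ i : Fin 4, tDet (D (.q a4 b2)) (D (.a i)) (D (.a (i+1))) ≠ 0 := by
    intro a4 b2 hSq i h0
    rcases collinear_between
      (hne hSq (hSa (i+1)) (fun h => GVert.noConfusion h))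
      (hne (hSa i) (hSa (i+1)) (fun h => by injection h with h'; exact hfinaa i h'))
      (hne (hSa i) hSq (fun h => GVert.noConfusion h)).symm.symm
      h0 with h|h|h
    · exact hvert (.a i) (.a (i+1)) (.q a4 b2) (adjAA i) (hSa i) (hSa (i+1)) hSq
        (fun h' => GVert.noConfusion h') (fun h' => GVert.noConfusion h') h
    · exact hvert (.q a4 b2) (.a (i+1)) (.a i) (adjQA a4 b2 (i+1)) hSq (hSa (i+1)) (hSa i)
        (fun h' => GVert.noConfusion h')
        (fun h' => by injection h' with h''; exact hfinaa i h'') h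
    · exact hvert (.q a4 b2) (.a i) (.a (i+1)) (adjQA a4 b2 i) hSq (hSa i) (hSa (i+1))
        (fun h' => GVert.noConfusion h')
        (fun h' => by injection h' with h''; exact hfinaa i h''.symm) h
  exact Cfg.false' {
    A := fun i => D (.a i)
    Q1 := D (.q p₁.1 p₁.2)
    Q2 := D (.q p₂.1 p₂.2)
    B := D (.b 0)
    dAA := fun i j hij h => hij (by
      have := hinj (hSa i) (hSa j) h
      injection this)
    dQQ := hne hSq1 hSq2 hq12
    dQ1A := fun i => hne hSq1 (hSa i) (fun h => GVert.noConfusion h)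
    dQ2A := fun i => hne hSq2 (hSa i) (fun h => GVert.noConfusion h)
    dBQ1 := hne hSb hSq1 (fun h => GVert.noConfusion h)
    dBQ2 := hne hSb hSq2 (fun h => GVert.noConfusion h)
    dBA := fun i => hne hSb (hSa i) (fun h => GVert.noConfusion h)
    nT := hnondeg p₁.1 p₁.2 hSq1
    nU := hnondeg p₂.1 p₂.2 hSq2
    iSS := fun i k hik => hSub _ _ _ _ _ (adjQA p₁.1 p₁.2 i) (adjQA p₁.1 p₁.2 k)
      hSq1 (hSa i) hSq1 (hSa k)
      (by rintro (⟨-, h⟩|⟨h, -⟩)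
          · injection h with h'; exact hik h'
          · exact GVert.noConfusion h)
      (by rintro z (rfl|rfl) h2
          · rfl
          · rcases h2 with h|h
            · exact absurd h (fun h' => GVert.noConfusion h')
            · injection h with h'; exact absurd h' hik)
    iRR := fun i k hik => hSub _ _ _ _ _ (adjQA p₂.1 p₂.2 i) (adjQA p₂.1 p₂.2 k)
      hSq2 (hSa i) hSq2 (hSa k)
      (by rintro (⟨-, h⟩|⟨h, -⟩)
          · injection h with h'; exact hik h'
          · exact GVert.noConfusion h)
      (by rintro z (rfl|rfl) h2
          · rfl
          · rcases h2 with h|h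
            · exact absurd h (fun h' => GVert.noConfusion h')
            · injection h with h'; exact absurd h' hik)
    iSReq := fun i => hSub _ _ _ _ _ (adjQA p₁.1 p₁.2 i) (adjQA p₂.1 p₂.2 i)
      hSq1 (hSa i) hSq2 (hSa i)
      (by rintro (⟨h, -⟩|⟨h, -⟩)
          · exact hq12 h
          · exact GVert.noConfusion h)
      (by rintro z (rfl|rfl) h2
          · rcases h2 with h|h
            · exact absurd h hq12
            · exact absurd h (fun h' => GVert.noConfusion h')
          · rfl)
    iSRne := fun i k hik => hEmp _ _ _ _ (adjQA p₁.1 p₁.2 i) (adjQA p₂.1 p₂.2 k)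
      hSq1 (hSa i) hSq2 (hSa k)
      (by rintro (⟨h, -⟩|⟨h, -⟩)
          · exact hq12 h
          · exact GVert.noConfusion h)
      (by rintro z (rfl|rfl) (h|h)
          · exact hq12 h
          · exact GVert.noConfusion h
          · exact GVert.noConfusion h.symm
          · injection h with h'; exact hik h')
    iSP := fun i k hk1 hk2 => hEmp _ _ _ _ (adjQA p₁.1 p₁.2 k) (adjAA i)
      hSq1 (hSa k) (hSa i) (hSa (i+1))
      (by rintro (⟨h, -⟩|⟨h, -⟩) <;> exact GVert.noConfusion h)
      (by rintro z (rfl|rfl) (h|h)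
          · exact GVert.noConfusion h
          · exact GVert.noConfusion h
          · injection h with h'; exact hk1 h'
          · injection h with h'; exact hk2 h')
    iSPl := fun i => hSub _ _ _ _ _ (adjQA p₁.1 p₁.2 i) (adjAA i)
      hSq1 (hSa i) (hSa i) (hSa (i+1))
      (by rintro (⟨h, -⟩|⟨h, -⟩) <;> exact GVert.noConfusion h)
      (by rintro z (rfl|rfl) h2
          · rcases h2 with h|h <;> exact absurd h (fun h' => GVert.noConfusion h')
          · rfl)
    iSPr := fun i => hSub _ _ _ _ _ (adjQA p₁.1 p₁.2 (i+1)) (adjAA i)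
      hSq1 (hSa (i+1)) (hSa i) (hSa (i+1))
      (by rintro (⟨h, -⟩|⟨h, -⟩) <;> exact GVert.noConfusion h)
      (by rintro z (rfl|rfl) h2
          · rcases h2 with h|h <;> exact absurd h (fun h' => GVert.noConfusion h')
          · rfl)
    iRP := fun i k hk1 hk2 => hEmp _ _ _ _ (adjQA p₂.1 p₂.2 k) (adjAA i)
      hSq2 (hSa k) (hSa i) (hSa (i+1))
      (by rintro (⟨h, -⟩|⟨h, -⟩) <;> exact GVert.noConfusion h)
      (by rintro z (rfl|rfl) (h|h)
          · exact GVert.noConfusion h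
          · exact GVert.noConfusion h
          · injection h with h'; exact hk1 h'
          · injection h with h'; exact hk2 h')
    iRPl := fun i => hSub _ _ _ _ _ (adjQA p₂.1 p₂.2 i) (adjAA i)
      hSq2 (hSa i) (hSa i) (hSa (i+1))
      (by rintro (⟨h, -⟩|⟨h, -⟩) <;> exact GVert.noConfusion h)
      (by rintro z (rfl|rfl) h2
          · rcases h2 with h|h <;> exact absurd h (fun h' => GVert.noConfusion h')
          · rfl)
    iRPr := fun i => hSub _ _ _ _ _ (adjQA p₂.1 p₂.2 (i+1)) (adjAA i)
      hSq2 (hSa (i+1)) (hSa i) (hSa (i+1))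
      (by rintro (⟨h, -⟩|⟨h, -⟩) <;> exact GVert.noConfusion h)
      (by rintro z (rfl|rfl) h2
          · rcases h2 with h|h <;> exact absurd h (fun h' => GVert.noConfusion h')
          · rfl)
    iPP := fun i k h1 h2 h3 => hEmp _ _ _ _ (adjAA i) (adjAA k)
      (hSa i) (hSa (i+1)) (hSa k) (hSa (k+1))
      (by rintro (⟨h, -⟩|⟨h, -⟩)
          · injection h with h'; exact h1 h'.symm
          · injection h with h'; exact h3 h')
      (by rintro z (rfl|rfl) (h|h)
          · injection h with h'; exact h1 h'.symm
          · injection h with h'; exact h3 h'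
          · injection h with h'; exact h2 h'.symm
          · injection h with h'
            exact h1 (add_right_cancel h').symm)
    iPPadj := fun i => hSub _ _ _ _ _ (adjAA i) (adjAA (i+1))
      (hSa i) (hSa (i+1)) (hSa (i+1)) (hSa (i+1+1))
      (by rintro (⟨h, -⟩|⟨h, -⟩)
          · injection h with h'; exact hfinaa i h'
          · injection h with h'
            exact (show ∀ j : Fin 4, j ≠ j + 1 + 1 by decide) i h')
      (by rintro z (rfl|rfl) h2
          · rcases h2 with h|h
            · injection h with h'; exact absurd h' (hfinaa i)
            · injection h with h'
              exact absurd h' ((show ∀ j : Fin 4, j ≠ j + 1 + 1 by decide) i)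
          · rfl)
    iB1S := fun i => hSub _ _ _ _ _ (adjQB p₁.1 p₁.2).symm (adjQA p₁.1 p₁.2 i)
      hSb hSq1 hSq1 (hSa i)
      (by rintro (⟨h, -⟩|⟨h, -⟩) <;> exact GVert.noConfusion h)
      (by rintro z (rfl|rfl) h2
          · rcases h2 with h|h <;> exact absurd h (fun h' => GVert.noConfusion h')
          · rfl)
    iB1R := fun i => hEmp _ _ _ _ (adjQB p₁.1 p₁.2).symm (adjQA p₂.1 p₂.2 i)
      hSb hSq1 hSq2 (hSa i)
      (by rintro (⟨h, -⟩|⟨h, -⟩) <;> exact GVert.noConfusion h)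
      (by rintro z (rfl|rfl) (h|h)
          · exact GVert.noConfusion h
          · exact GVert.noConfusion h
          · exact hq12 h
          · exact GVert.noConfusion h)
    iB1P := fun i => hEmp _ _ _ _ (adjQB p₁.1 p₁.2).symm (adjAA i)
      hSb hSq1 (hSa i) (hSa (i+1))
      (by rintro (⟨h, -⟩|⟨h, -⟩) <;> exact GVert.noConfusion h)
      (by rintro z (rfl|rfl) (h|h) <;> exact GVert.noConfusion h)
    iB2R := fun i => hSub _ _ _ _ _ (adjQB p₂.1 p₂.2).symm (adjQA p₂.1 p₂.2 i)
      hSb hSq2 hSq2 (hSa i)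
      (by rintro (⟨h, -⟩|⟨h, -⟩) <;> exact GVert.noConfusion h)
      (by rintro z (rfl|rfl) h2
          · rcases h2 with h|h <;> exact absurd h (fun h' => GVert.noConfusion h')
          · rfl)
    iB2S := fun i => hEmp _ _ _ _ (adjQB p₂.1 p₂.2).symm (adjQA p₁.1 p₁.2 i)
      hSb hSq2 hSq1 (hSa i)
      (by rintro (⟨h, -⟩|⟨h, -⟩) <;> exact GVert.noConfusion h)
      (by rintro z (rfl|rfl) (h|h)
          · exact GVert.noConfusion h
          · exact GVert.noConfusion h
          · exact hq12 h.symm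
          · exact GVert.noConfusion h)
    iB2P := fun i => hEmp _ _ _ _ (adjQB p₂.1 p₂.2).symm (adjAA i)
      hSb hSq2 (hSa i) (hSa (i+1))
      (by rintro (⟨h, -⟩|⟨h, -⟩) <;> exact GVert.noConfusion h)
      (by rintro z (rfl|rfl) (h|h) <;> exact GVert.noConfusion h)
    vQ1P := fun i => hvseg (.a i) (.a (i+1)) _ (adjAA i) (hSa i) (hSa (i+1)) hSq1
      (fun h => GVert.noConfusion h) (fun h => GVert.noConfusion h)
    vQ1R := fun i => hvseg (.q p₂.1 p₂.2) (.a i) _ (adjQA p₂.1 p₂.2 i) hSq2 (hSa i) hSq1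
      hq12 (fun h => GVert.noConfusion h)
    vQ2P := fun i => hvseg (.a i) (.a (i+1)) _ (adjAA i) (hSa i) (hSa (i+1)) hSq2
      (fun h => GVert.noConfusion h) (fun h => GVert.noConfusion h)
    vQ2S := fun i => hvseg (.q p₁.1 p₁.2) (.a i) _ (adjQA p₁.1 p₁.2 i) hSq1 (hSa i) hSq2
      hq12.symm (fun h => GVert.noConfusion h)
    vBP := fun i => hvseg (.a i) (.a (i+1)) _ (adjAA i) (hSa i) (hSa (i+1)) hSb
      (fun h => GVert.noConfusion h) (fun h => GVert.noConfusion h)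
    vBS := fun i => hvseg (.q p₁.1 p₁.2) (.a i) _ (adjQA p₁.1 p₁.2 i) hSq1 (hSa i) hSb
      (fun h => GVert.noConfusion h) (fun h => GVert.noConfusion h)
    vBR := fun i => hvseg (.q p₂.1 p₂.2) (.a i) _ (adjQA p₂.1 p₂.2 i) hSq2 (hSa i) hSb
      (fun h => GVert.noConfusion h) (fun h => GVert.noConfusion h)
    vAS := fun i k hk => hvseg (.q p₁.1 p₁.2) (.a i) _ (adjQA p₁.1 p₁.2 i) hSq1 (hSa i)
      (hSa k) (fun h => GVert.noConfusion h) (fun h => by injection h with h'; exact hk h')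
    vAR := fun i k hk => hvseg (.q p₂.1 p₂.2) (.a i) _ (adjQA p₂.1 p₂.2 i) hSq2 (hSa i)
      (hSa k) (fun h => GVert.noConfusion h) (fun h => by injection h with h'; exact hk h')
    vAP := fun i k hk1 hk2 => hvseg (.a i) (.a (i+1)) _ (adjAA i) (hSa i) (hSa (i+1))
      (hSa k) (fun h => by injection h with h'; exact hk1 h')
      (fun h => by injection h with h'; exact hk2 h') }
end

section
/- Let a_1, a_2, a_3, a_4 ∈ ℝ² with a_2 lying in the interior of the convex hull of {a_1, a_3, a_4} (a concave quadrilateral a_1 a_2 a_3 a_4 with reflex corner at a_2). Then there is no point q with q ∉ convexHull{a_1, a_3, a_4}, with q strictly on the same side of the line through a_1 and a_2 as a_4, such that each of the four segments [q, a_1], [q, a_2], [q, a_3], [q, a_4] intersects each of the quadrilateral edges [a_1, a_2], [a_2, a_3], [a_3, a_4], [a_4, a_1] only in endpoints shared by the two segments. In other words, the edge a_1 a_2 of the concave quadrilateral cannot be good. -/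
def det2 (p q r : ℝ × ℝ) : ℝ :=
  (q.1 - p.1) * (r.2 - p.2) - (q.2 - p.2) * (r.1 - p.1)

open Set

lemma det2_affine (a b x y : ℝ × ℝ) (u : ℝ) :
    det2 a b ((1 - u) • x + u • y) = (1 - u) * det2 a b x + u * det2 a b y := by
  simp only [det2, Prod.fst_add, Prod.snd_add, Prod.smul_fst, Prod.smul_snd, smul_eq_mul]
  ring

lemma det2_sum (a₁ a₃ a₄ x : ℝ × ℝ) :
    det2 a₃ a₄ x + det2 a₄ a₁ x + det2 a₁ a₃ x = det2 a₁ a₃ a₄ := by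
  simp only [det2]; ring

lemma det2_cramer1 (a₁ a₃ a₄ x : ℝ × ℝ) :
    det2 a₁ a₃ a₄ * x.1 = det2 a₃ a₄ x * a₁.1 + det2 a₄ a₁ x * a₃.1 + det2 a₁ a₃ x * a₄.1 := by
  simp only [det2]; ring

lemma det2_cramer2 (a₁ a₃ a₄ x : ℝ × ℝ) :
    det2 a₁ a₃ a₄ * x.2 = det2 a₃ a₄ x * a₁.2 + det2 a₄ a₁ x * a₃.2 + det2 a₁ a₃ x * a₄.2 := by
  simp only [det2]; ring

section main
variable (a₁ a₂ a₃ a₄ : ℝ × ℝ)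

lemma hull_mem_iff (x : ℝ × ℝ) :
    x ∈ convexHull ℝ ({a₁, a₃, a₄} : Set (ℝ × ℝ)) ↔
      ∃ z ∈ segment ℝ a₃ a₄, x ∈ segment ℝ a₁ z := by
  rw [show ({a₁, a₃, a₄} : Set (ℝ × ℝ)) = insert a₁ {a₃, a₄} from rfl,
    convexHull_insert (by simp), convexHull_pair, mem_convexJoin]
  simp

lemma coords_of_mem (x : ℝ × ℝ) (hx : x ∈ convexHull ℝ ({a₁, a₃, a₄} : Set (ℝ × ℝ))) :
    ∃ α β γ : ℝ, 0 ≤ α ∧ 0 ≤ β ∧ 0 ≤ γ ∧ α + β + γ = 1 ∧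
      x = α • a₁ + β • a₃ + γ • a₄ := by
  obtain ⟨z, hz, hxz⟩ := (hull_mem_iff a₁ a₃ a₄ x).1 hx
  rw [segment_eq_image] at hz hxz
  obtain ⟨v, ⟨hv0, hv1⟩, rfl⟩ := hz
  obtain ⟨u, ⟨hu0, hu1⟩, rfl⟩ := hxz
  refine ⟨1 - u, u * (1 - v), u * v, by linarith, by nlinarith, by nlinarith, by ring, ?_⟩
  rw [Prod.ext_iff]
  constructor <;>
    simp only [Prod.fst_add, Prod.snd_add, Prod.smul_fst, Prod.smul_snd, smul_eq_mul] <;> ring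

lemma mem_of_coords (α β γ : ℝ) (x : ℝ × ℝ) (hα : 0 ≤ α) (hβ : 0 ≤ β) (hγ : 0 ≤ γ)
    (hsum : α + β + γ = 1) (hx : x = α • a₁ + β • a₃ + γ • a₄) :
    x ∈ convexHull ℝ ({a₁, a₃, a₄} : Set (ℝ × ℝ)) := by
  rw [hull_mem_iff]
  rcases eq_or_lt_of_le (add_nonneg hβ hγ) with h0 | h0
  · -- β + γ = 0, so β = γ = 0, x = a₁
    have hβ0 : β = 0 := by linarith
    have hγ0 : γ = 0 := by linarith
    have hα1 : α = 1 := by linarith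
    refine ⟨a₃, left_mem_segment ℝ a₃ a₄, ?_⟩
    rw [hx, hβ0, hγ0, hα1]
    simp [left_mem_segment]
  · refine ⟨(1 - γ / (β + γ)) • a₃ + (γ / (β + γ)) • a₄, ?_, ?_⟩
    · rw [segment_eq_image]
      exact ⟨γ / (β + γ), ⟨by positivity, by rw [div_le_one h0]; linarith⟩, rfl⟩
    · rw [segment_eq_image]
      refine ⟨β + γ, ⟨le_of_lt h0, by linarith⟩, ?_⟩
      rw [hx, Prod.ext_iff]
      have hne : β + γ ≠ 0 := ne_of_gt h0
      constructor
      · simp only [Prod.fst_add, Prod.snd_add, Prod.smul_fst, Prod.smul_snd, smul_eq_mul]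
        field_simp
        linear_combination (-a₁.1) * hsum
      · simp only [Prod.fst_add, Prod.snd_add, Prod.smul_fst, Prod.smul_snd, smul_eq_mul]
        field_simp
        linear_combination (-a₁.2) * hsum
end main

set_option maxHeartbeats 2000000 in
/-- Let `a₂` lie in the interior of the convex hull of
`{a₁, a₃, a₄}` (concave quadrilateral `a₁a₂a₃a₄` with reflex corner at `a₂`).
Then there is no point `q` outside the convex hull of `{a₁, a₃, a₄}`, strictly
on the same side of the line through `a₁` and `a₂` as `a₄`, such that each of
the segments `[q, aₖ]` (`k = 1, …, 4`) intersects each quadrilateral edge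
`[aₘ, aₘ₊₁]` only in endpoints shared by the two segments. -/
theorem concave_edge_not_good (a₁ a₂ a₃ a₄ : ℝ × ℝ)
    (h₂ : a₂ ∈ interior (convexHull ℝ ({a₁, a₃, a₄} : Set (ℝ × ℝ)))) :
    ¬ ∃ q : ℝ × ℝ,
        q ∉ convexHull ℝ ({a₁, a₃, a₄} : Set (ℝ × ℝ)) ∧
        0 < det2 a₁ a₂ q * det2 a₁ a₂ a₄ ∧
        (∀ k m : Fin 4,
          ∀ p ∈ segment ℝ q (![a₁, a₂, a₃, a₄] k) ∩
                segment ℝ (![a₁, a₂, a₃, a₄] m) (![a₁, a₂, a₃, a₄] (m+1)),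
            (p = q ∨ p = ![a₁, a₂, a₃, a₄] k) ∧
            (p = ![a₁, a₂, a₃, a₄] m ∨ p = ![a₁, a₂, a₃, a₄] (m+1))) := by
  rintro ⟨q, hqS, hside, hgood⟩
  set S := convexHull ℝ ({a₁, a₃, a₄} : Set (ℝ × ℝ)) with hSdef
  have ha₂S : a₂ ∈ S := interior_subset h₂
  -- notation
  set gq := det2 a₁ a₂ q with hgq
  set g3 := det2 a₁ a₂ a₃ with hg3
  set g4 := det2 a₁ a₂ a₄ with hg4
  set Δ := det2 a₁ a₃ a₄ with hΔdef
  have hgqne : gq ≠ 0 := by intro h; rw [h, zero_mul] at hside; exact lt_irrefl 0 hside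
  have hg4ne : g4 ≠ 0 := by intro h; rw [h, mul_zero] at hside; exact lt_irrefl 0 hside
  -- det2 a₁ a₂ on hull points
  have g_of_mem : ∀ x ∈ S, ∃ β γ : ℝ, 0 ≤ β ∧ 0 ≤ γ ∧ det2 a₁ a₂ x = β * g3 + γ * g4 := by
    intro x hx
    obtain ⟨α, β, γ, hα, hβ, hγ, hsum, hxeq⟩ := coords_of_mem a₁ a₃ a₄ x hx
    refine ⟨β, γ, hβ, hγ, ?_⟩
    rw [hxeq, hg3, hg4]
    simp only [det2, Prod.fst_add, Prod.snd_add, Prod.smul_fst, Prod.smul_snd, smul_eq_mul]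
    linear_combination ((a₂.1 - a₁.1) * a₁.2 - (a₂.2 - a₁.2) * a₁.1) * hsum
  -- a₁ ≠ a₂
  have hN : 0 < (a₂.1 - a₁.1) ^ 2 + (a₂.2 - a₁.2) ^ 2 := by
    by_contra h
    push_neg at h
    have h1 : a₂.1 - a₁.1 = 0 := by nlinarith [sq_nonneg (a₂.1 - a₁.1), sq_nonneg (a₂.2 - a₁.2)]
    have h2 : a₂.2 - a₁.2 = 0 := by nlinarith [sq_nonneg (a₂.1 - a₁.1), sq_nonneg (a₂.2 - a₁.2)]
    apply hgqne
    rw [hgq]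
    simp only [det2, h1, h2]
    ring
  -- perturbation: both signs of det2 a₁ a₂ are attained on S
  obtain ⟨ε, hε, hball⟩ : ∃ ε > 0, Metric.ball a₂ ε ⊆ S := by
    rw [mem_interior_iff_mem_nhds, Metric.mem_nhds_iff] at h₂
    obtain ⟨ε, hε, h⟩ := h₂
    exact ⟨ε, hε, h⟩
  have hg34 : g3 * g4 < 0 := by
    obtain ⟨c, hcpos, hcM⟩ :
        ∃ c : ℝ, 0 < c ∧ c * (|a₁.2 - a₂.2| + |a₂.1 - a₁.1| + 1) < ε := by
      refine ⟨ε / (2 * (|a₁.2 - a₂.2| + |a₂.1 - a₁.1| + 1)), by positivity, ?_⟩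
      rw [div_mul_eq_mul_div, div_lt_iff₀ (by positivity)]
      nlinarith [abs_nonneg (a₁.2 - a₂.2), abs_nonneg (a₂.1 - a₁.1)]
    set n : ℝ × ℝ := (a₁.2 - a₂.2, a₂.1 - a₁.1) with hn
    have hmem : ∀ d : ℝ, |d| ≤ c → a₂ + d • n ∈ S := by
      intro d hd
      apply hball
      rw [Metric.mem_ball, Prod.dist_eq]
      have h1 : dist (a₂ + d • n).1 a₂.1 < ε := by
        rw [Real.dist_eq]
        have : (a₂ + d • n).1 - a₂.1 = d * (a₁.2 - a₂.2) := by
          simp only [hn, Prod.fst_add, Prod.smul_fst, smul_eq_mul]; ring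
        rw [this, abs_mul]
        have h1 : |a₁.2 - a₂.2| ≤ |a₁.2 - a₂.2| + |a₂.1 - a₁.1| + 1 := by
          have := abs_nonneg (a₂.1 - a₁.1); linarith
        have h2 : |d| * |a₁.2 - a₂.2| ≤ c * (|a₁.2 - a₂.2| + |a₂.1 - a₁.1| + 1) :=
          mul_le_mul hd h1 (abs_nonneg _) (le_of_lt hcpos)
        linarith
      have h2 : dist (a₂ + d • n).2 a₂.2 < ε := by
        rw [Real.dist_eq]
        have : (a₂ + d • n).2 - a₂.2 = d * (a₂.1 - a₁.1) := by
          simp only [hn, Prod.snd_add, Prod.smul_snd, smul_eq_mul]; ring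
        rw [this, abs_mul]
        have h1 : |a₂.1 - a₁.1| ≤ |a₁.2 - a₂.2| + |a₂.1 - a₁.1| + 1 := by
          have := abs_nonneg (a₁.2 - a₂.2); linarith
        have h2 : |d| * |a₂.1 - a₁.1| ≤ c * (|a₁.2 - a₂.2| + |a₂.1 - a₁.1| + 1) :=
          mul_le_mul hd h1 (abs_nonneg _) (le_of_lt hcpos)
        linarith
      exact max_lt h1 h2
    have hval : ∀ d : ℝ, det2 a₁ a₂ (a₂ + d • n) =
        d * ((a₂.1 - a₁.1) ^ 2 + (a₂.2 - a₁.2) ^ 2) := by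
      intro d
      simp only [det2, hn, Prod.fst_add, Prod.snd_add, Prod.smul_fst, Prod.smul_snd, smul_eq_mul]
      ring
    obtain ⟨bp, gp, hbp, hgp, heqp⟩ := g_of_mem _ (hmem c (by rw [abs_of_pos hcpos]))
    obtain ⟨bm, gm, hbm, hgm, heqm⟩ := g_of_mem _ (hmem (-c) (by rw [abs_neg, abs_of_pos hcpos]))
    rw [hval] at heqp heqm
    have hpos : 0 < bp * g3 + gp * g4 := by rw [← heqp]; positivity
    have hneg : bm * g3 + gm * g4 < 0 := by
      rw [← heqm]
      have : 0 < c * ((a₂.1 - a₁.1) ^ 2 + (a₂.2 - a₁.2) ^ 2) := by positivity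
      linarith
    rcases lt_trichotomy g4 0 with h4 | h4 | h4
    · rcases lt_trichotomy g3 0 with h3 | h3 | h3
      · nlinarith
      · nlinarith
      · exact mul_neg_of_pos_of_neg h3 h4
    · exact absurd h4 hg4ne
    · rcases lt_trichotomy g3 0 with h3 | h3 | h3
      · exact mul_neg_of_neg_of_pos h3 h4
      · nlinarith
      · nlinarith
  have hgq3 : gq * g3 < 0 := by
    by_contra h
    push_neg at h
    nlinarith [mul_nonneg h (sq_nonneg g4), mul_neg_of_pos_of_neg hside hg34]
  -- Δ ≠ 0
  have hΔne : Δ ≠ 0 := by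
    obtain ⟨α, β, γ, hα, hβ, hγ, hsum, ha₂eq⟩ := coords_of_mem a₁ a₃ a₄ a₂ ha₂S
    have hG3 : g3 = -(γ * Δ) := by
      rw [hg3, hΔdef, ha₂eq]
      simp only [det2, Prod.fst_add, Prod.snd_add, Prod.smul_fst, Prod.smul_snd, smul_eq_mul]
      linear_combination ((a₃.2 - a₁.2) * a₁.1 - (a₃.1 - a₁.1) * a₁.2) * hsum
    have hG4 : g4 = β * Δ := by
      rw [hg4, hΔdef, ha₂eq]
      simp only [det2, Prod.fst_add, Prod.snd_add, Prod.smul_fst, Prod.smul_snd, smul_eq_mul]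
      linear_combination ((a₄.2 - a₁.2) * a₁.1 - (a₄.1 - a₁.1) * a₁.2) * hsum
    intro h
    rw [hG3, hG4, h] at hg34
    simp at hg34
  -- the open "strict barycentric" set is inside the interior
  have hUsub : {x : ℝ × ℝ | 0 < det2 a₃ a₄ x * Δ ∧ 0 < det2 a₄ a₁ x * Δ ∧ 0 < det2 a₁ a₃ x * Δ}
      ⊆ interior S := by
    apply interior_maximal
    · intro x hx
      obtain ⟨h1, h2, h3⟩ := hx
      have key : ∀ t : ℝ, 0 < t * Δ → 0 ≤ t / Δ := by
        intro t ht
        have hΔ2 : 0 < Δ * Δ := mul_self_pos.2 hΔne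
        have : t / Δ = t * Δ / (Δ * Δ) := by
          rw [div_eq_div_iff hΔne (ne_of_gt hΔ2)]; ring
        rw [this]
        positivity
      refine mem_of_coords a₁ a₃ a₄ (det2 a₃ a₄ x / Δ) (det2 a₄ a₁ x / Δ) (det2 a₁ a₃ x / Δ) x
        (key _ h1) (key _ h2) (key _ h3) ?_ ?_
      · rw [← add_div, ← add_div, div_eq_one_iff_eq hΔne]
        exact det2_sum a₁ a₃ a₄ x
      · rw [Prod.ext_iff]
        constructor
        · simp only [Prod.fst_add, Prod.smul_fst, smul_eq_mul]
          field_simp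
          linear_combination det2_cramer1 a₁ a₃ a₄ x
        · simp only [Prod.snd_add, Prod.smul_snd, smul_eq_mul]
          field_simp
          linear_combination det2_cramer2 a₁ a₃ a₄ x
    · have hc : ∀ a b : ℝ × ℝ, Continuous fun x : ℝ × ℝ => det2 a b x * Δ := by
        intro a b
        unfold det2
        fun_prop
      exact ((isOpen_lt continuous_const (hc a₃ a₄)).and
        ((isOpen_lt continuous_const (hc a₄ a₁)).and (isOpen_lt continuous_const (hc a₁ a₃))))
  -- a hull point that is not interior lies on one of the three edges
  have edge_class : ∀ p : ℝ × ℝ, p ∈ S → p ∉ interior S →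
      p ∈ segment ℝ a₃ a₄ ∨ p ∈ segment ℝ a₄ a₁ ∨ p ∈ segment ℝ a₁ a₃ := by
    intro p hp hpni
    obtain ⟨α, β, γ, hα, hβ, hγ, hsum, hpeq⟩ := coords_of_mem a₁ a₃ a₄ p hp
    by_cases hα0 : α = 0
    · left
      rw [segment_eq_image]
      refine ⟨γ, ⟨hγ, by linarith⟩, ?_⟩
      have hβ' : β = 1 - γ := by linarith
      rw [hpeq, hα0, hβ']
      simp [zero_smul]
    · by_cases hβ0 : β = 0
      · right; left
        rw [segment_eq_image]
        refine ⟨α, ⟨hα, by linarith⟩, ?_⟩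
        have hγ' : γ = 1 - α := by linarith
        rw [hpeq, hβ0, hγ']
        simp only [zero_smul, add_zero]
        exact add_comm _ _
      · by_cases hγ0 : γ = 0
        · right; right
          rw [segment_eq_image]
          refine ⟨β, ⟨hβ, by linarith⟩, ?_⟩
          have hα' : α = 1 - β := by linarith
          rw [hpeq, hγ0, hα']
          simp only [zero_smul, add_zero]
        · exfalso
          apply hpni
          apply hUsub
          have hαp : 0 < α := lt_of_le_of_ne hα (Ne.symm hα0)
          have hβp : 0 < β := lt_of_le_of_ne hβ (Ne.symm hβ0)
          have hγp : 0 < γ := lt_of_le_of_ne hγ (Ne.symm hγ0)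
          have hα' : α = 1 - β - γ := by linarith
          have hΔ2 : 0 < Δ * Δ := mul_self_pos.2 hΔne
          refine ⟨?_, ?_, ?_⟩
          · have : det2 a₃ a₄ p = α * Δ := by
              rw [hpeq, hα', hΔdef]
              simp only [det2, Prod.fst_add, Prod.snd_add, Prod.smul_fst, Prod.smul_snd,
                smul_eq_mul]
              ring
            rw [this, mul_assoc]
            exact mul_pos hαp hΔ2
          · have : det2 a₄ a₁ p = β * Δ := by
              rw [hpeq, hα', hΔdef]
              simp only [det2, Prod.fst_add, Prod.snd_add, Prod.smul_fst, Prod.smul_snd,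
                smul_eq_mul]
              ring
            rw [this, mul_assoc]
            exact mul_pos hβp hΔ2
          · have : det2 a₁ a₃ p = γ * Δ := by
              rw [hpeq, hα', hΔdef]
              simp only [det2, Prod.fst_add, Prod.snd_add, Prod.smul_fst, Prod.smul_snd,
                smul_eq_mul]
              ring
            rw [this, mul_assoc]
            exact mul_pos hγp hΔ2
  -- walk along the segment from a₂ to q until we leave S
  have hcont : Continuous fun θ : ℝ => (1 - θ) • a₂ + θ • q := by
    apply Continuous.add
    · exact (continuous_const.sub continuous_id).smul continuous_const
    · exact continuous_id.smul continuous_const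
  have hSclosed : IsClosed S := (Set.toFinite ({a₁, a₃, a₄} : Set (ℝ × ℝ))).isClosed_convexHull ℝ
  set T := {θ : ℝ | θ ∈ Icc (0:ℝ) 1 ∧ ((1 - θ) • a₂ + θ • q) ∈ S} with hTdef
  have hT0 : (0:ℝ) ∈ T := by
    refine ⟨⟨le_refl 0, zero_le_one⟩, ?_⟩
    simpa using ha₂S
  have hTne : T.Nonempty := ⟨0, hT0⟩
  have hTbdd : BddAbove T := ⟨1, fun θ hθ => hθ.1.2⟩
  have hTclosed : IsClosed T := IsClosed.inter isClosed_Icc (hSclosed.preimage hcont)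
  have htT : sSup T ∈ T := hTclosed.csSup_mem hTne hTbdd
  have hspos : 0 ≤ sSup T := le_csSup hTbdd hT0
  have hple : sSup T ≤ 1 := csSup_le hTne fun θ hθ => hθ.1.2
  set p := (1 - sSup T) • a₂ + sSup T • q with hpdef
  have hpS : p ∈ S := htT.2
  have hpni : p ∉ interior S := by
    intro hint
    have hlt1 : sSup T < 1 := by
      rcases eq_or_lt_of_le hple with h | h
      · exfalso
        apply hqS
        have hpq : p = q := by rw [hpdef, h]; simp
        exact hpq ▸ hpS
      · exact h
    obtain ⟨δ, hδ, hsub⟩ := Metric.mem_nhds_iff.1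
      ((isOpen_interior.preimage hcont).mem_nhds hint)
    have hgt : sSup T < min 1 (sSup T + δ / 2) := lt_min hlt1 (by linarith)
    have hmem : min 1 (sSup T + δ / 2) ∈ Metric.ball (sSup T) δ := by
      rw [Metric.mem_ball, Real.dist_eq, abs_lt]
      have := min_le_right 1 (sSup T + δ / 2)
      constructor <;> linarith
    have hθ'T : min 1 (sSup T + δ / 2) ∈ T := by
      refine ⟨⟨by linarith, min_le_left _ _⟩, interior_subset (hsub hmem)⟩
    have := le_csSup hTbdd hθ'T
    linarith
  have hpseg : p ∈ segment ℝ q a₂ := by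
    rw [segment_eq_image]
    refine ⟨1 - sSup T, ⟨by linarith, by linarith⟩, ?_⟩
    rw [hpdef]
    simp only [sub_sub_cancel]
    exact add_comm _ _
  have hpnq : p ≠ q := fun h => hqS (h ▸ hpS)
  have hpna₂ : p ≠ a₂ := fun h => hpni (h ▸ h₂)
  rcases edge_class p hpS hpni with hcase | hcase | hcase
  · rcases (hgood 1 2 p ⟨hpseg, hcase⟩).1 with h | h
    · exact hpnq h
    · exact hpna₂ h
  · rcases (hgood 1 3 p ⟨hpseg, hcase⟩).1 with h | h
    · exact hpnq h
    · exact hpna₂ h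
  · -- p on segment a₁ a₃ : contradiction with the side condition
    rw [segment_eq_image] at hcase
    obtain ⟨w, ⟨hw0, hw1⟩, hweq⟩ := hcase
    have e1 : det2 a₁ a₂ p = w * g3 := by
      rw [← hweq, det2_affine]
      have : det2 a₁ a₂ a₁ = 0 := by simp only [det2]; ring
      rw [this, hg3]
      ring
    have e2 : det2 a₁ a₂ p = sSup T * gq := by
      rw [hpdef, det2_affine]
      have : det2 a₁ a₂ a₂ = 0 := by simp only [det2]; ring
      rw [this, hgq]
      ring
    have hs0 : sSup T ≠ 0 := by
      intro h
      apply hpna₂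
      rw [hpdef, h]
      simp
    have hspos' : 0 < sSup T := lt_of_le_of_ne hspos (Ne.symm hs0)
    have e : sSup T * gq = w * g3 := e2.symm.trans e1
    have e3 : sSup T * (gq * gq) = w * (gq * g3) := by linear_combination gq * e
    have h1 : 0 < sSup T * (gq * gq) := mul_pos hspos' (mul_self_pos.2 hgqne)
    have h2 : w * (gq * g3) ≤ 0 := mul_nonpos_of_nonneg_of_nonpos hw0 hgq3.le
    linarith
end
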